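/- arXiv:1708.09313 — 6 statements merged into one kernel-verified Lean document; each statement's English description precedes it below -/
import Mathlib

section
/- Let n = 2m and let f be the rotation symmetric Boolean function with short algebraic normal form x₀x_k (1 ≤ k ≤ n-1), i.e., f is the sum of all distinct cyclic shifts of x₀x_k. Then f is bent if and only if k = m. -/
namespace Stmt10Aux

lemma chi_add : ∀ a b : ZMod 2,
    ((-1:ℤ))^((a+b).val) = (-1:ℤ)^a.val * (-1:ℤ)^b.val := by decide

lemma chi_one : ∀ v : ZMod 2, (-1:ℤ)^((v+1).val) = -(-1:ℤ)^v.val := by decide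

lemma add_self (a : ZMod 2) : a + a = 0 := by revert a; decide

lemma pair_sum : ∀ u v : ZMod 2,
    (∑ p : ZMod 2 × ZMod 2, (-1:ℤ)^((p.1*p.2 + u*p.1 + v*p.2).val))
      = 2 * (-1:ℤ)^((u*v).val) := by decide

lemma chi_sum {ι : Type*} (s : Finset ι) (g : ι → ZMod 2) :
    ((-1:ℤ))^((∑ i ∈ s, g i).val) = ∏ i ∈ s, ((-1:ℤ))^((g i).val) := by
  induction s using Finset.cons_induction with
  | empty => simp
  | cons a s ha ih => rw [Finset.sum_cons, Finset.prod_cons, chi_add, ih]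

lemma fin_add_val (m : ℕ) (a b : Fin (2*m)) :
    (a + b).val = if a.val + b.val < 2*m then a.val + b.val else a.val + b.val - 2*m := by
  rw [Fin.val_add]
  split
  · exact Nat.mod_eq_of_lt ‹_›
  · rw [Nat.mod_eq_sub_mod (by omega),
      Nat.mod_eq_of_lt (by have := a.isLt; have := b.isLt; omega)]

def ai (m : ℕ) (j : Fin m) : Fin (2*m) := ⟨j.val, by have := j.isLt; omega⟩
def bi (m : ℕ) (j : Fin m) : Fin (2*m) := ⟨j.val + m, by have := j.isLt; omega⟩

lemma split_sum {M : Type*} [AddCommMonoid M] (m : ℕ) (F : Fin (2*m) → M) :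
    ∑ i, F i = ∑ j : Fin m, (F (ai m j) + F (bi m j)) := by
  have h : 2*m = m + m := by ring
  have e : ∑ i : Fin (2*m), F i = ∑ i : Fin (m+m), F (Fin.cast h.symm i) := by
    exact Fintype.sum_equiv (finCongr h) _ _ (fun i => rfl)
  rw [e, Fin.sum_univ_add, ← Finset.sum_add_distrib]
  apply Finset.sum_congr rfl
  intro j _
  have h1 : Fin.cast h.symm (Fin.castAdd m j) = ai m j := by
    apply Fin.ext; simp [ai]
  have h2 : Fin.cast h.symm (Fin.natAdd m j) = bi m j := by
    apply Fin.ext; simp [bi]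
  rw [h1, h2]

lemma bent_of_ip (m : ℕ) (hm : 0 < m) (w : Fin (2*m) → ZMod 2)
    (f : (Fin (2*m) → ZMod 2) → ZMod 2)
    (hf : ∀ x, f x = ∑ j : Fin m, x (ai m j) * x (bi m j)) :
    (∑ x : Fin (2*m) → ZMod 2, (-1:ℤ)^((f x + ∑ i, w i * x i).val)) = 2^m ∨
    (∑ x : Fin (2*m) → ZMod 2, (-1:ℤ)^((f x + ∑ i, w i * x i).val)) = -(2^m) := by
  have key : (∑ x : Fin (2*m) → ZMod 2, (-1:ℤ)^((f x + ∑ i, w i * x i).val))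
      = ∏ j : Fin m, (2 * (-1:ℤ)^((w (ai m j) * w (bi m j)).val)) := by
    have step1 : ∀ x : Fin (2*m) → ZMod 2,
        f x + ∑ i, w i * x i
          = ∑ j : Fin m, (x (ai m j) * x (bi m j)
              + w (ai m j) * x (ai m j) + w (bi m j) * x (bi m j)) := by
      intro x
      rw [hf, split_sum m (fun i => w i * x i), ← Finset.sum_add_distrib]
      apply Finset.sum_congr rfl
      intro j _; ring
    let E : (Fin m → ZMod 2 × ZMod 2) ≃ (Fin (2*m) → ZMod 2) :=
    { toFun := fun y i => if h : i.val < m then (y ⟨i.val, h⟩).1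
        else (y ⟨i.val - m, by have := i.isLt; omega⟩).2
      invFun := fun x j => (x (ai m j), x (bi m j))
      left_inv := by
        intro y; funext j; apply Prod.ext
        · simp [ai]
        · have h : ¬ (j.val + m < m) := by omega
          simp [bi, h]
      right_inv := by
        intro x; funext i
        by_cases h : i.val < m
        · simp [h, ai]
        · simp [h, bi]
          congr 1; apply Fin.ext; simp; omega }
    have step2 : (∑ x : Fin (2*m) → ZMod 2, (-1:ℤ)^((f x + ∑ i, w i * x i).val))
        = ∑ y : Fin m → ZMod 2 × ZMod 2,
            ∏ j : Fin m, (-1:ℤ)^(((y j).1 * (y j).2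
              + w (ai m j) * (y j).1 + w (bi m j) * (y j).2).val) := by
      rw [← Equiv.sum_comp E (fun x => (-1:ℤ)^((f x + ∑ i, w i * x i).val))]
      apply Finset.sum_congr rfl
      intro y _
      rw [step1, chi_sum]
      apply Finset.prod_congr rfl
      intro j _
      have ha : E y (ai m j) = (y j).1 := by simp [E, ai]
      have hb : E y (bi m j) = (y j).2 := by
        have h : ¬ (j.val + m < m) := by omega
        simp [E, bi, h]
      rw [show (E y) (ai m j) = (y j).1 from ha, show (E y) (bi m j) = (y j).2 from hb]
    rw [step2]
    have hpu := Finset.prod_univ_sum (fun _ : Fin m => (Finset.univ : Finset (ZMod 2 × ZMod 2)))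
      (fun j p => (-1:ℤ)^((p.1*p.2 + w (ai m j)*p.1 + w (bi m j)*p.2).val))
    rw [Fintype.piFinset_univ] at hpu
    rw [← hpu]
    apply Finset.prod_congr rfl
    intro j _
    exact pair_sum (w (ai m j)) (w (bi m j))
  rw [key, Finset.prod_mul_distrib, Finset.prod_const, Finset.prod_pow_eq_pow_sum,
    Finset.card_univ, Fintype.card_fin]
  rcases Nat.even_or_odd (∑ i : Fin m, (w (ai m i) * w (bi m i)).val) with he | ho
  · left; rw [he.neg_one_pow, mul_one]
  · right; rw [ho.neg_one_pow, mul_neg_one]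

end Stmt10Aux

open Stmt10Aux in
/-- For `n = 2m`, the MRS function with SANF `x₀x_k` (`1 ≤ k ≤ n-1`),
i.e. the sum of all distinct cyclic shifts of `x₀x_k`, is bent iff `k = m`. -/
theorem stmt10 (m : ℕ) (hm : 0 < m) (k : Fin (2*m)) (hk1 : 1 ≤ k.val) :
    (∀ w : Fin (2*m) → ZMod 2,
      (∑ x : Fin (2*m) → ZMod 2,
        (-1 : ℤ) ^ (((∑ T ∈ Finset.univ.image (fun j : Fin (2*m) =>
            ({⟨0, by omega⟩, k} : Finset (Fin (2*m))).image (· + j)), ∏ t ∈ T, x t)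
          + ∑ i, w i * x i).val)) = 2 ^ m ∨
      (∑ x : Fin (2*m) → ZMod 2,
        (-1 : ℤ) ^ (((∑ T ∈ Finset.univ.image (fun j : Fin (2*m) =>
            ({⟨0, by omega⟩, k} : Finset (Fin (2*m))).image (· + j)), ∏ t ∈ T, x t)
          + ∑ i, w i * x i).val)) = -(2 ^ m))
    ↔ k.val = m := by
  have hn : 0 < 2*m := by omega
  haveI : NeZero (2*m) := ⟨by omega⟩
  have hik := k.isLt
  have hT : ∀ j : Fin (2*m),
      (({⟨0, by omega⟩, k} : Finset (Fin (2*m))).image (· + j)) = insert j {k + j} := by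
    intro j
    rw [Finset.image_insert, Finset.image_singleton]
    congr 1
    apply Fin.ext
    simp [Fin.add_def, Nat.mod_eq_of_lt j.isLt]
  constructor
  · -- bent → k = m
    intro H
    by_contra hkm
    have hne : ∀ j : Fin (2*m), j ≠ k + j := by
      intro j h
      have e := congrArg Fin.val h
      rw [fin_add_val] at e
      have := j.isLt
      split_ifs at e <;> omega
    have hinj : ∀ j ∈ (Finset.univ : Finset (Fin (2*m))), ∀ j' ∈ Finset.univ,
        (fun j : Fin (2*m) => ({⟨0, by omega⟩, k} : Finset (Fin (2*m))).image (· + j)) j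
        = (fun j : Fin (2*m) => ({⟨0, by omega⟩, k} : Finset (Fin (2*m))).image (· + j)) j'
        → j = j' := by
      intro j _ j' _ hjj
      simp only [hT] at hjj
      have m1 : j = j' ∨ j = k + j' := by
        have : j ∈ (insert j' {k + j'} : Finset (Fin (2*m))) := hjj ▸ (by simp)
        simpa using this
      have m2 : k + j = j' ∨ k + j = k + j' := by
        have : k + j ∈ (insert j' {k + j'} : Finset (Fin (2*m))) := hjj ▸ (by simp)
        simpa using this
      have hij := j.isLt
      have hij' := j'.isLt
      rcases m1 with h1 | h1
      · exact h1
      · rcases m2 with h2 | h2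
        · exfalso
          have e1 := congrArg Fin.val h1
          have e2 := congrArg Fin.val h2
          rw [fin_add_val] at e1
          rw [fin_add_val] at e2
          split_ifs at e1 e2 <;> omega
        · have e2 := congrArg Fin.val h2
          have e1 := congrArg Fin.val h1
          rw [fin_add_val] at e1
          rw [fin_add_val, fin_add_val] at e2
          apply Fin.ext
          split_ifs at e1 e2 <;> omega
    have hfs : ∀ x : Fin (2*m) → ZMod 2,
        (∑ T ∈ Finset.univ.image (fun j : Fin (2*m) =>
            ({⟨0, by omega⟩, k} : Finset (Fin (2*m))).image (· + j)), ∏ t ∈ T, x t)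
          = ∑ j : Fin (2*m), x j * x (k + j) := by
      intro x
      rw [Finset.sum_image hinj]
      apply Finset.sum_congr rfl
      intro j _
      rw [hT j, Finset.prod_insert (by simpa using hne j), Finset.prod_singleton]
    let w₀ : Fin (2*m) → ZMod 2 := fun i => if i = ⟨0, hn⟩ then 1 else 0
    let c : Fin (2*m) → ZMod 2 := fun _ => 1
    let g : (Fin (2*m) → ZMod 2) → ℤ := fun x =>
      (-1 : ℤ) ^ (((∑ T ∈ Finset.univ.image (fun j : Fin (2*m) =>
          ({⟨0, by omega⟩, k} : Finset (Fin (2*m))).image (· + j)), ∏ t ∈ T, x t)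
        + ∑ i, w₀ i * x i).val)
    have hflip : ∀ x, g (x + c) = - g x := by
      intro x
      show (-1:ℤ) ^ _ = -((-1:ℤ) ^ _)
      have e1 : (∑ T ∈ Finset.univ.image (fun j : Fin (2*m) =>
            ({⟨0, by omega⟩, k} : Finset (Fin (2*m))).image (· + j)), ∏ t ∈ T, (x + c) t)
          = ∑ T ∈ Finset.univ.image (fun j : Fin (2*m) =>
            ({⟨0, by omega⟩, k} : Finset (Fin (2*m))).image (· + j)), ∏ t ∈ T, x t := by
        rw [hfs, hfs]
        have expand : ∀ j : Fin (2*m), (x + c) j * (x + c) (k + j)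
            = x j * x (k + j) + (x j + x (k + j)) + 1 := by
          intro j
          show (x j + 1) * (x (k + j) + 1) = _
          ring
        have hshift : ∑ j : Fin (2*m), x (k + j) = ∑ j : Fin (2*m), x j :=
          Fintype.sum_equiv (Equiv.addLeft k) _ _ (fun j => rfl)
        have hmid : ∑ j : Fin (2*m), (x j + x (k + j)) = 0 := by
          rw [Finset.sum_add_distrib, hshift, ← Finset.sum_add_distrib,
            Finset.sum_congr rfl (fun j _ => add_self (x j)), Finset.sum_const_zero]
        have hones : ∑ _j : Fin (2*m), (1 : ZMod 2) = 0 := by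
          rw [Finset.sum_const, Finset.card_univ, Fintype.card_fin, nsmul_eq_mul, mul_one,
            Nat.cast_mul]
          have : ((2:ℕ) : ZMod 2) = 0 := by decide
          rw [this, zero_mul]
        rw [Finset.sum_congr rfl (fun j _ => expand j), Finset.sum_add_distrib,
          Finset.sum_add_distrib, hmid, hones, add_zero, add_zero]
      have e2 : (∑ i, w₀ i * (x + c) i) = (∑ i, w₀ i * x i) + 1 := by
        have hterm : ∀ i, w₀ i * (x + c) i = w₀ i * x i + w₀ i := by
          intro i
          show w₀ i * (x i + 1) = _
          ring
        rw [Finset.sum_congr rfl (fun i _ => hterm i), Finset.sum_add_distrib]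
        congr 1
        simp [w₀]
        rw [Finset.sum_eq_single (0 : Fin (2*m))]
        · simp
        · intro b _ hb; simp [hb]
        · intro h; exact absurd (Finset.mem_univ _) h
      rw [e1, e2, ← add_assoc]
      exact chi_one _
    have hzero : (∑ x : Fin (2*m) → ZMod 2, g x) = 0 := by
      have h1 : ∑ x : Fin (2*m) → ZMod 2, g (x + c) = ∑ x : Fin (2*m) → ZMod 2, g x :=
        Fintype.sum_equiv (Equiv.addRight c) _ _ (fun x => rfl)
      rw [Finset.sum_congr rfl (fun x _ => hflip x), Finset.sum_neg_distrib] at h1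
      linarith
    have hpos : (0:ℤ) < 2^m := by positivity
    rcases H w₀ with h | h <;> rw [hzero] at h <;> linarith
  · -- k = m → bent
    intro hk w
    have hab : ∀ j : Fin m, k + ai m j = bi m j := by
      intro j
      apply Fin.ext
      have := j.isLt
      rw [Fin.val_add]
      show (k.val + j.val) % (2*m) = j.val + m
      rw [hk, Nat.mod_eq_of_lt (by omega)]
      omega
    have hba : ∀ j : Fin m, k + bi m j = ai m j := by
      intro j
      apply Fin.ext
      have := j.isLt
      rw [Fin.val_add]
      show (k.val + (j.val + m)) % (2*m) = j.val
      rw [hk, show m + (j.val + m) = j.val + 1*(2*m) by ring, Nat.add_mul_mod_self_right,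
        Nat.mod_eq_of_lt (by omega)]
    have himg : Finset.univ.image (fun j : Fin (2*m) =>
          ({⟨0, by omega⟩, k} : Finset (Fin (2*m))).image (· + j))
        = Finset.univ.image
            (fun j : Fin m => (insert (ai m j) {bi m j} : Finset (Fin (2*m)))) := by
      ext T
      simp only [Finset.mem_image, Finset.mem_univ, true_and]
      constructor
      · rintro ⟨j, rfl⟩
        rw [hT j]
        by_cases hj : j.val < m
        · refine ⟨⟨j.val, hj⟩, ?_⟩
          have ha : ai m ⟨j.val, hj⟩ = j := Fin.ext rfl
          rw [← hab ⟨j.val, hj⟩, ha]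
        · refine ⟨⟨j.val - m, by have := j.isLt; omega⟩, ?_⟩
          have hb : bi m ⟨j.val - m, by have := j.isLt; omega⟩ = j := by
            apply Fin.ext
            show j.val - m + m = j.val
            omega
          rw [← hba ⟨j.val - m, _⟩, hb, Finset.pair_comm]
      · rintro ⟨j, rfl⟩
        refine ⟨ai m j, ?_⟩
        rw [hT, hab]
    have hinj2 : ∀ i ∈ (Finset.univ : Finset (Fin m)), ∀ i' ∈ Finset.univ,
        (fun j : Fin m => (insert (ai m j) {bi m j} : Finset (Fin (2*m)))) i
        = (fun j : Fin m => (insert (ai m j) {bi m j} : Finset (Fin (2*m)))) i' → i = i' := by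
      intro i _ i' _ hii
      simp only at hii
      have : ai m i ∈ (insert (ai m i') {bi m i'} : Finset (Fin (2*m))) := hii ▸ (by simp)
      have hii2 : ai m i = ai m i' ∨ ai m i = bi m i' := by simpa using this
      have h1 := i.isLt
      have h2 := i'.isLt
      apply Fin.ext
      rcases hii2 with h | h <;> have := congrArg Fin.val h <;>
        simp only [ai, bi] at this <;> omega
    have hS : ∀ x : Fin (2*m) → ZMod 2,
        (∑ T ∈ Finset.univ.image (fun j : Fin (2*m) =>
            ({⟨0, by omega⟩, k} : Finset (Fin (2*m))).image (· + j)), ∏ t ∈ T, x t)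
          = ∑ j : Fin m, x (ai m j) * x (bi m j) := by
      intro x
      rw [himg, Finset.sum_image hinj2]
      apply Finset.sum_congr rfl
      intro j _
      have hne : ai m j ∉ ({bi m j} : Finset (Fin (2*m))) := by
        simp only [Finset.mem_singleton]
        intro h
        have := congrArg Fin.val h
        simp only [ai, bi] at this
        omega
      rw [Finset.prod_insert hne, Finset.prod_singleton]
    exact bent_of_ip m hm w _ hS
end

section
/- Let n = 2m and let f be a homogeneous degree-2 rotation symmetric Boolean function in n variables. If f is bent, then the monomial x₀x_m (and hence the full function f₀ = ⊕_{i=0}^{m-1} x_i x_{m+i}) appears in the algebraic normal form of f. -/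
/-- A homogeneous degree-2 rotation symmetric function in `n = 2m`
variables has SANF `⊕_{i=1}^{n-1} a_i x₀x_i`; if it is bent, then the monomial
`x₀x_m` appears, i.e. `a_m = 1` (so `f` contains `f₀`). -/
theorem stmt11 (m : ℕ) (hm : 0 < m) (a : ℕ → ZMod 2)
    (f : (Fin (2*m) → ZMod 2) → ZMod 2)
    (hf : ∀ x, f x = ∑ i ∈ Finset.Icc 1 (2*m - 1), a i *
        ∑ T ∈ Finset.univ.image (fun j : Fin (2*m) =>
          ({⟨0, by omega⟩, ⟨i % (2*m), Nat.mod_lt _ (by omega)⟩} :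
            Finset (Fin (2*m))).image (· + j)), ∏ t ∈ T, x t)
    (hbent : ∀ w : Fin (2*m) → ZMod 2,
      (∑ x : Fin (2*m) → ZMod 2, (-1 : ℤ) ^ ((f x + ∑ i, w i * x i).val)) = 2 ^ m ∨
      (∑ x : Fin (2*m) → ZMod 2, (-1 : ℤ) ^ ((f x + ∑ i, w i * x i).val)) = -(2 ^ m)) :
    a m = 1 := by
  haveI : NeZero (2*m) := ⟨by omega⟩
  by_contra hne
  have hv : ∀ v : ZMod 2, v = 0 ∨ v = 1 := by decide
  have ha : a m = 0 := (hv (a m)).resolve_right hne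
  have hadd : ∀ v : ZMod 2, v + v = 0 := by decide
  have hz0 : (⟨0, by omega⟩ : Fin (2*m)) = 0 := by
    apply Fin.ext; simp
  set o : Fin (2*m) → ZMod 2 := fun _ => 1 with hodef
  -- invariance of f under complementation of all variables
  have key : ∀ x : Fin (2*m) → ZMod 2, f (x + o) = f x := by
    intro x
    rw [hf, hf]
    refine Finset.sum_congr rfl ?_
    intro i hi
    simp only [Finset.mem_Icc] at hi
    by_cases him : i = m
    · subst him; rw [ha, zero_mul, zero_mul]
    · congr 1
      set c : Fin (2*m) := ⟨i % (2*m), Nat.mod_lt _ (by omega)⟩ with hcdef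
      have hcval : (c : ℕ) = i := Nat.mod_eq_of_lt (by omega)
      have hc0 : c ≠ 0 := by
        intro h
        have h' := congrArg Fin.val h
        rw [hcval, Fin.val_zero] at h'
        omega
      have hcc : c + c ≠ 0 := by
        intro h
        have h' := congrArg Fin.val h
        rw [Fin.val_add, hcval, Fin.val_zero] at h'
        rcases Nat.lt_or_ge (i + i) (2*m) with h2 | h2
        · rw [Nat.mod_eq_of_lt h2] at h'; omega
        · rw [Nat.mod_eq_sub_mod h2, Nat.mod_eq_of_lt (by omega)] at h'
          omega
      have hinj : Function.Injective (fun j : Fin (2*m) =>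
          ({(0 : Fin (2*m)), c} : Finset (Fin (2*m))).image (· + j)) := by
        intro j j' h
        simp only [Finset.image_insert, Finset.image_singleton, zero_add] at h
        have hj : j ∈ ({j', c + j'} : Finset (Fin (2*m))) := by
          rw [← h]; exact Finset.mem_insert_self _ _
        have hcj : c + j ∈ ({j', c + j'} : Finset (Fin (2*m))) := by
          rw [← h]; exact Finset.mem_insert_of_mem (Finset.mem_singleton_self _)
        simp only [Finset.mem_insert, Finset.mem_singleton] at hj hcj
        rcases hj with hj | hj
        · exact hj
        · rcases hcj with hcj | hcj
          · exfalso
            apply hcc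
            rw [← hcj] at hj
            rw [← add_assoc] at hj
            exact (right_eq_add.mp hj)
          · exact add_left_cancel hcj
      have hne2 : ∀ j : Fin (2*m), j ≠ c + j := by
        intro j h
        exact hc0 (right_eq_add.mp h)
      have hpair : ∀ (y : Fin (2*m) → ZMod 2) (j : Fin (2*m)),
          (∏ t ∈ ({(0 : Fin (2*m)), c} : Finset (Fin (2*m))).image (· + j), y t)
            = y j * y (c + j) := by
        intro y j
        rw [Finset.image_insert, Finset.image_singleton, zero_add]
        exact Finset.prod_pair (hne2 j)
      rw [hz0]
      rw [Finset.sum_image (fun j _ j' _ h => hinj h),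
        Finset.sum_image (fun j _ j' _ h => hinj h)]
      simp only [hpair, Pi.add_apply, hodef]
      have expand : ∀ j : Fin (2*m),
          (x j + 1) * (x (c + j) + 1)
            = x j * x (c + j) + (x j + x (c + j) + 1) := by
        intro j; ring
      rw [Finset.sum_congr rfl (fun j _ => expand j), Finset.sum_add_distrib]
      have hzz : (∑ j : Fin (2*m), (x j + x (c + j) + 1)) = 0 := by
        rw [Finset.sum_add_distrib, Finset.sum_add_distrib]
        have h1 : (∑ j : Fin (2*m), x (c + j)) = ∑ j : Fin (2*m), x j :=
          Fintype.sum_equiv (Equiv.addLeft c) _ _ (fun j => rfl)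
        have h2 : (∑ _j : Fin (2*m), (1 : ZMod 2)) = 0 := by
          rw [Finset.sum_const, Finset.card_univ, Fintype.card_fin, nsmul_eq_mul,
            mul_one, Nat.cast_mul]
          rw [show ((2:ℕ) : ZMod 2) = 0 by decide, zero_mul]
        rw [h1, h2, add_zero, hadd]
      rw [hzz, add_zero]
  -- the Walsh coefficient at the indicator of coordinate 0 vanishes
  set w : Fin (2*m) → ZMod 2 := fun t => if t = 0 then 1 else 0 with hwdef
  have hw : ∀ x : Fin (2*m) → ZMod 2, (∑ i, w i * x i) = x 0 := by
    intro x
    simp [hwdef, ite_mul, Finset.sum_ite_eq']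
  have hS := hbent w
  simp only [hw] at hS
  have hflip : ∀ v : ZMod 2, (-1:ℤ) ^ ((v + 1).val) = -((-1:ℤ) ^ v.val) := by decide
  have hneg : ∀ x : Fin (2*m) → ZMod 2,
      (-1:ℤ) ^ ((f (x + o) + (x + o) 0).val)
        = -((-1:ℤ) ^ ((f x + x 0).val)) := by
    intro x
    have h1 : (x + o) 0 = x 0 + 1 := rfl
    rw [key, h1, show f x + (x 0 + 1) = (f x + x 0) + 1 by ring, hflip]
  have hre : (∑ x : Fin (2*m) → ZMod 2, (-1:ℤ) ^ ((f (x + o) + (x + o) 0).val))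
      = ∑ x : Fin (2*m) → ZMod 2, (-1:ℤ) ^ ((f x + x 0).val) :=
    Fintype.sum_equiv (Equiv.addRight o) _ _ (fun x => rfl)
  rw [Finset.sum_congr rfl (fun x _ => hneg x), Finset.sum_neg_distrib] at hre
  have hzero : (∑ x : Fin (2*m) → ZMod 2, (-1:ℤ) ^ ((f x + x 0).val)) = 0 := by
    linarith
  rw [hzero] at hS
  have hpos : (0:ℤ) < 2 ^ m := by positivity
  rcases hS with h | h <;> linarith
end

section
/- Let f : 𝔽₂ⁿ → 𝔽₂ and let J ⊆ {0,1,…,n-1} with |J| = s. Suppose the algebraic normal form of f contains no monomial x_{j₁}⋯x_{j_t} with t > 1 and all indices j₁,…,j_t ∈ J. Then the nonlinearity of f satisfies N_f ≤ 2^{n-1} - 2^{s-1}. -/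
private lemma stmt12_card (n : ℕ) (K : Finset (Fin n)) :
    (Finset.univ.filter fun u : Fin n → ZMod 2 => ∀ j ∈ K, u j = 0).card
      = 2 ^ (n - K.card) := by
  have h1 : (Finset.univ.filter fun u : Fin n → ZMod 2 => ∀ j ∈ K, u j = 0)
      = Fintype.piFinset (fun j => if j ∈ K then ({0} : Finset (ZMod 2)) else Finset.univ) := by
    ext u
    simp only [Finset.mem_filter, Finset.mem_univ, true_and, Fintype.mem_piFinset]
    constructor
    · intro h j; by_cases hj : j ∈ K <;> simp [hj, h j]
    · intro h j hj; have := h j; simpa [hj] using this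
  rw [h1, Fintype.card_piFinset]
  have h2 : ∀ i : Fin n, (if i ∈ K then ({0} : Finset (ZMod 2)) else Finset.univ).card
      = if i ∈ K then 1 else 2 := by
    intro i; by_cases hi : i ∈ K <;> simp [hi]
  simp only [h2]
  rw [Finset.prod_ite, Finset.prod_const, Finset.prod_const, one_pow, one_mul]
  congr 1
  have := Finset.card_filter_add_card_filter_not (s := (Finset.univ : Finset (Fin n)))
    (p := fun i => i ∈ K)
  simp only [Finset.filter_mem_eq_inter, Finset.univ_inter, Finset.card_univ,
    Fintype.card_fin] at this ⊢
  omega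

private lemma stmt12_half (n : ℕ) (J : Finset (Fin n)) (x : Fin n → ZMod 2) (j₀ : Fin n)
    (hj₀ : j₀ ∉ J) (hx : x j₀ = 1) (a b : ZMod 2) :
    (((Finset.univ.filter fun u : Fin n → ZMod 2 => ∀ j ∈ J, u j = 0)).filter
        fun u => a = b + ∑ i, u i * x i).card * 2
      = ((Finset.univ.filter fun u : Fin n → ZMod 2 => ∀ j ∈ J, u j = 0)).card := by
  classical
  set U := (Finset.univ.filter fun u : Fin n → ZMod 2 => ∀ j ∈ J, u j = 0) with hU
  set P : (Fin n → ZMod 2) → Prop := fun u => a = b + ∑ i, u i * x i with hP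
  have hsplit := Finset.card_filter_add_card_filter_not (s := U) (p := P)
  set e : Fin n → ZMod 2 := fun i => if i = j₀ then 1 else 0 with he
  have hUe : ∀ u ∈ U, u + e ∈ U := by
    intro u hu
    simp only [hU, Finset.mem_filter, Finset.mem_univ, true_and] at hu ⊢
    intro j hj
    have : j ≠ j₀ := fun h => hj₀ (h ▸ hj)
    simp [he, Pi.add_apply, hu j hj, this]
  have hsum : ∀ u : Fin n → ZMod 2, ∑ i, (u + e) i * x i = (∑ i, u i * x i) + 1 := by
    intro u
    simp only [Pi.add_apply, add_mul, Finset.sum_add_distrib]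
    congr 1
    have : ∀ i : Fin n, e i * x i = if i = j₀ then x i else 0 := by
      intro i; by_cases hi : i = j₀ <;> simp [he, hi]
    simp [this, hx]
  have hflip : ∀ a b t : ZMod 2, (a = b + (t + 1)) ↔ ¬ (a = b + t) := by decide
  have hee : ∀ u : Fin n → ZMod 2, u + e + e = u := by
    intro u; funext i; simp only [Pi.add_apply]
    have : (e i : ZMod 2) + e i = 0 := by
      by_cases hi : i = j₀ <;> simp [he, hi] <;> decide
    rw [add_assoc, this, add_zero]
  have hbij : (U.filter P).card = (U.filter fun u => ¬ P u).card := by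
    apply Finset.card_bij' (fun u _ => u + e) (fun u _ => u + e)
    · intro u hu
      simp only [Finset.mem_filter] at hu ⊢
      refine ⟨hUe u hu.1, ?_⟩
      show ¬ (a = b + ∑ i, (u + e) i * x i)
      rw [hsum u]
      intro hcon
      exact (hflip a b _).mp hcon hu.2
    · intro u hu
      simp only [Finset.mem_filter] at hu ⊢
      refine ⟨hUe u hu.1, ?_⟩
      show a = b + ∑ i, (u + e) i * x i
      rw [hsum u]
      exact (hflip a b _).mpr hu.2
    · intro u _; exact hee u
    · intro u _; exact hee u
  show (U.filter P).card * 2 = U.card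
  omega

private lemma stmt12_key (n : ℕ) (f : (Fin n → ZMod 2) → ZMod 2)
    (J : Finset (Fin n))
    (c : Finset (Fin n) → ZMod 2)
    (hc : ∀ x, f x = ∑ S : Finset (Fin n), c S * ∏ j ∈ S, x j)
    (hJc : ∀ S : Finset (Fin n), 1 < S.card → S ⊆ J → c S = 0)
    (x : Fin n → ZMod 2) (hx : ∀ j ∉ J, x j = 0) :
    f x = c ∅ + ∑ j ∈ J, c {j} * x j := by
  classical
  rw [hc x]
  rw [← Finset.sum_subset (Finset.subset_univ (insert ∅ (J.image ({·}))))]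
  · rw [Finset.sum_insert (by simp)]
    rw [Finset.sum_image (by intro a _ b _ h; simpa using h)]
    simp
  · intro S _ hS
    simp only [Finset.mem_insert, Finset.mem_image] at hS
    push_neg at hS
    obtain ⟨hS0, hS1⟩ := hS
    by_cases hsub : S ⊆ J
    · have hcard : 1 < S.card := by
        rcases Nat.lt_or_ge S.card 2 with h | h
        · interval_cases h' : S.card
          · exact absurd (Finset.card_eq_zero.mp h') hS0.ne_empty
          · obtain ⟨j, hj⟩ := Finset.card_eq_one.mp h'
            exact absurd hj.symm (hS1 j (hsub (hj ▸ Finset.mem_singleton_self j)))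
        · exact h
      rw [hJc S hcard hsub, zero_mul]
    · obtain ⟨j, hjS, hjJ⟩ := Finset.not_subset.mp hsub
      rw [Finset.prod_eq_zero hjS (hx j hjJ), mul_zero]

/-- If the ANF of `f : 𝔽₂^n → 𝔽₂` contains no monomial of degree `> 1`
with all indices in a set `J` of size `s`, then the nonlinearity of `f` is at most
`2^{n-1} - 2^{s-1}`; i.e., some affine function is within that Hamming distance of `f`. -/
theorem stmt12 (n s : ℕ) (f : (Fin n → ZMod 2) → ZMod 2)
    (J : Finset (Fin n)) (hJ : J.card = s)
    (c : Finset (Fin n) → ZMod 2)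
    (hc : ∀ x, f x = ∑ S : Finset (Fin n), c S * ∏ j ∈ S, x j)
    (hJc : ∀ S : Finset (Fin n), 1 < S.card → S ⊆ J → c S = 0) :
    ∃ (c0 : ZMod 2) (cl : Fin n → ZMod 2),
      (Finset.univ.filter (fun x : Fin n → ZMod 2 =>
          f x ≠ c0 + ∑ i, cl i * x i)).card ≤ 2 ^ (n-1) - 2 ^ (s-1) := by
  classical
  have key := stmt12_key n f J c hc hJc
  by_cases hsn : J = Finset.univ
  · -- J = univ : f is exactly affine
    refine ⟨c ∅, fun i => c {i}, ?_⟩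
    have hempty : (Finset.univ.filter (fun x : Fin n → ZMod 2 =>
        f x ≠ c ∅ + ∑ i, c {i} * x i)) = ∅ := by
      rw [Finset.filter_eq_empty_iff]
      intro x _
      simp only [ne_eq, not_not]
      have := key x (fun j hj => absurd (hsn ▸ Finset.mem_univ j) hj)
      rw [this, hsn]
    rw [hempty]
    simp
  · -- J ≠ univ : s < n
    have hslt : s < n := by
      have h1 : J ⊂ Finset.univ := Finset.ssubset_univ_iff.mpr hsn
      have := Finset.card_lt_card h1
      simpa [hJ, Finset.card_univ] using this
    set g : (Fin n → ZMod 2) → ZMod 2 := fun x => c ∅ + ∑ j ∈ J, c {j} * x j with hg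
    set U := (Finset.univ.filter fun u : Fin n → ZMod 2 => ∀ j ∈ J, u j = 0) with hUdef
    set V := (Finset.univ.filter fun x : Fin n → ZMod 2 => ∀ j ∈ Jᶜ, x j = 0) with hVdef
    set agr : (Fin n → ZMod 2) → ℕ := fun u =>
      (Finset.univ.filter fun x : Fin n → ZMod 2 => f x = g x + ∑ i, u i * x i).card with hagr
    clear_value g U V agr
    have hUcard : U.card = 2 ^ (n - s) := by rw [hUdef, stmt12_card, hJ]
    have hVcard : V.card = 2 ^ s := by
      rw [hVdef, stmt12_card, Finset.card_compl, Fintype.card_fin, hJ]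
      congr 1
      omega
    have hdomcard : Fintype.card (Fin n → ZMod 2) = 2 ^ n := by
      rw [Fintype.card_fun, ZMod.card, Fintype.card_fin]
    -- per-point count
    have hcnt : ∀ x : Fin n → ZMod 2,
        (U.filter fun u => f x = g x + ∑ i, u i * x i).card
          = if x ∈ V then 2 ^ (n - s) else 2 ^ (n - s - 1) := by
      intro x
      by_cases hxV : x ∈ V
      · rw [if_pos hxV]
        have hxV' := hxV
        rw [hVdef, Finset.mem_filter] at hxV'
        have hxz : ∀ j ∉ J, x j = 0 := by
          intro j hj
          exact hxV'.2 j (Finset.mem_compl.mpr hj)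
        have hfx : f x = g x := by rw [hg]; exact key x hxz
        have hfull : (U.filter fun u => f x = g x + ∑ i, u i * x i) = U := by
          rw [Finset.filter_eq_self]
          intro u hu
          rw [hUdef, Finset.mem_filter] at hu
          have h0 : (∑ i, u i * x i) = 0 := by
            apply Finset.sum_eq_zero
            intro i _
            by_cases hi : i ∈ J
            · rw [hu.2 i hi, zero_mul]
            · rw [hxz i hi, mul_zero]
          rw [h0, add_zero, hfx]
        rw [hfull, hUcard]
      · rw [if_neg hxV]
        have hex0 : ∃ j₀, j₀ ∉ J ∧ x j₀ ≠ 0 := by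
          by_contra hcon
          push_neg at hcon
          refine hxV ?_
          rw [hVdef, Finset.mem_filter]
          exact ⟨Finset.mem_univ x, fun j hj => hcon j (Finset.mem_compl.mp hj)⟩
        obtain ⟨j₀, hj₀J, hj₀x⟩ := hex0
        have hx1 : x j₀ = 1 := by
          have h2 : ∀ a : ZMod 2, a ≠ 0 → a = 1 := by decide
          exact h2 _ hj₀x
        have hhalf := stmt12_half n J x j₀ hj₀J hx1 (f x) (g x)
        rw [← hUdef, hUcard] at hhalf
        have hns : n - s = (n - s - 1) + 1 := by clear * - hslt; omega
        rw [hns, pow_succ] at hhalf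
        exact Nat.eq_of_mul_eq_mul_right (by norm_num) hhalf
    -- double counting
    have hdouble : ∑ u ∈ U, agr u
        = ∑ x : Fin n → ZMod 2, (U.filter fun u => f x = g x + ∑ i, u i * x i).card := by
      simp only [hagr, Finset.card_filter]
      rw [Finset.sum_comm]
    have htot : ∑ u ∈ U, agr u
        = 2 ^ s * 2 ^ (n - s) + (2 ^ n - 2 ^ s) * 2 ^ (n - s - 1) := by
      rw [hdouble]
      simp only [hcnt]
      rw [Finset.sum_ite, Finset.sum_const, Finset.sum_const, smul_eq_mul, smul_eq_mul]
      have h1 : (Finset.univ.filter fun x : Fin n → ZMod 2 => x ∈ V) = V := by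
        ext y; simp
      have h2 := Finset.card_filter_add_card_filter_not
        (s := (Finset.univ : Finset (Fin n → ZMod 2))) (p := fun x => x ∈ V)
      rw [Finset.card_univ, hdomcard, h1, hVcard] at h2
      rw [h1, hVcard]
      have h3 : (Finset.univ.filter fun x : Fin n → ZMod 2 => x ∉ V).card
          = 2 ^ n - 2 ^ s := by clear * - h2; omega
      rw [h3]
    -- pigeonhole
    have hex : ∃ u ∈ U, 2 ^ (n - 1) + 2 ^ (s - 1) ≤ agr u := by
      by_contra hcon
      push_neg at hcon
      have h1 : ∑ u ∈ U, (agr u + 1) ≤ U.card * (2 ^ (n - 1) + 2 ^ (s - 1)) := by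
        calc ∑ u ∈ U, (agr u + 1) ≤ ∑ _u ∈ U, (2 ^ (n - 1) + 2 ^ (s - 1)) :=
              Finset.sum_le_sum (fun u hu => hcon u hu)
          _ = U.card * (2 ^ (n - 1) + 2 ^ (s - 1)) := by
              rw [Finset.sum_const, smul_eq_mul]
      rw [Finset.sum_add_distrib, Finset.sum_const, smul_eq_mul, mul_one, htot, hUcard] at h1
      -- arithmetic contradiction
      obtain ⟨k, hk⟩ : ∃ k, n = s + k + 1 := ⟨n - s - 1, by clear * - hslt; omega⟩
      subst hk
      clear * - h1
      have e2 : s + k + 1 - s - 1 = k := by omega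
      have e3 : s + k + 1 - 1 = s + k := by omega
      have e1 : s + k + 1 - s = k + 1 := by omega
      rw [e2, e3, e1] at h1
      have q1 : (2:ℕ) ^ (k + 1) = 2 ^ k * 2 := by rw [pow_succ]
      have q2 : (2:ℕ) ^ (s + k + 1) = 2 ^ s * 2 ^ k * 2 := by
        rw [pow_add, pow_add, pow_one]
      have q3 : (2:ℕ) ^ (s + k) = 2 ^ s * 2 ^ k := by rw [pow_add]
      rw [q1, q2, q3] at h1
      have hC : 2 * 2 ^ (s - 1) ≤ 2 ^ s + 1 := by
        rcases Nat.eq_zero_or_pos s with rfl | hs1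
        · simp
        · obtain ⟨s', rfl⟩ : ∃ s', s = s' + 1 := ⟨s - 1, by omega⟩
          simp only [Nat.add_sub_cancel, pow_succ]
          omega
      have hA1 : 1 ≤ (2:ℕ) ^ s := Nat.one_le_two_pow
      have hB1 : 1 ≤ (2:ℕ) ^ k := Nat.one_le_two_pow
      -- name the atoms
      generalize hA : (2:ℕ) ^ s = A at *
      generalize hB : (2:ℕ) ^ k = B at *
      generalize hCC : (2:ℕ) ^ (s - 1) = C at *
      -- remove natural subtraction
      have hsub : A ≤ A * B * 2 := by nlinarith
      obtain ⟨t, ht⟩ : ∃ t, A * B * 2 - A = t ∧ t + A = A * B * 2 :=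
        ⟨_, rfl, by clear * - hsub; omega⟩
      rw [ht.1] at h1
      have ht2 : t * B + A * B = A * B * 2 * B := by
        rw [← add_mul, ht.2]
      have hCB := mul_le_mul_left hC B
      nlinarith [h1, ht2, hCB, hA1, hB1]
    obtain ⟨u, huU, hu⟩ := hex
    -- construct the affine function
    refine ⟨c ∅, fun i => (if i ∈ J then c {i} else 0) + u i, ?_⟩
    have hpt : ∀ x : Fin n → ZMod 2,
        c ∅ + ∑ i, ((if i ∈ J then c {i} else 0) + u i) * x i
          = g x + ∑ i, u i * x i := by
      intro x
      simp only [add_mul, Finset.sum_add_distrib, hg]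
      have hite : ∀ i : Fin n, (if i ∈ J then c {i} else 0) * x i
          = if i ∈ J then c {i} * x i else 0 := by
        intro i; by_cases hi : i ∈ J <;> simp [hi]
      simp only [hite]
      rw [← Finset.sum_filter]
      have hfJ : (Finset.univ.filter fun i : Fin n => i ∈ J) = J := by ext y; simp
      rw [hfJ, add_assoc]
    have heq : (Finset.univ.filter (fun x : Fin n → ZMod 2 =>
          f x ≠ c ∅ + ∑ i, ((if i ∈ J then c {i} else 0) + u i) * x i))
        = (Finset.univ.filter fun x : Fin n → ZMod 2 =>
          ¬ (f x = g x + ∑ i, u i * x i)) := by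
      apply Finset.filter_congr
      intro x _
      rw [hpt x]
    rw [heq]
    have hsplit := Finset.card_filter_add_card_filter_not
      (s := (Finset.univ : Finset (Fin n → ZMod 2)))
      (p := fun x => f x = g x + ∑ i, u i * x i)
    rw [Finset.card_univ, hdomcard] at hsplit
    have hagru : (Finset.univ.filter fun x : Fin n → ZMod 2 =>
        f x = g x + ∑ i, u i * x i).card = agr u := by rw [hagr]
    rw [hagru] at hsplit
    -- final arithmetic
    have h2n : (2:ℕ) ^ n = 2 * 2 ^ (n - 1) := by
      rw [← pow_succ']
      congr 1
      clear * - hslt; omega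
    have h2s : (2:ℕ) ^ (s - 1) ≤ 2 ^ (n - 1) :=
      Nat.pow_le_pow_right (by norm_num) (by clear * - hslt; omega)
    rw [h2n] at hsplit
    generalize hD : (Finset.univ.filter fun x : Fin n → ZMod 2 =>
      ¬ (f x = g x + ∑ i, u i * x i)).card = D at hsplit ⊢
    generalize hE : agr u = E at hsplit hu
    clear * - hsplit hu h2s
    generalize hP : (2:ℕ) ^ (n - 1) = P at *
    generalize hQ : (2:ℕ) ^ (s - 1) = Q at *
    omega
end

section
/- Let n = 2m and let f = ⊕_i f_i be a sum of short-cycle monomial rotation symmetric functions in n variables (each f_i has fewer than n monomials). If f is bent, then one of the f_i equals f₀ = ⊕_{i=0}^{m-1} x_i x_{m+i}. -/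
set_option maxHeartbeats 1000000

lemma zmod2_pow_add (a b : ZMod 2) :
    ((-1 : ℤ)) ^ (a + b).val = (-1 : ℤ) ^ a.val * (-1 : ℤ) ^ b.val := by
  revert a b; decide

lemma orth {n : ℕ} (y : Fin n → ZMod 2) :
    (∑ u : Fin n → ZMod 2, (-1 : ℤ) ^ (∑ i, u i * y i).val)
      = if y = 0 then (2 : ℤ) ^ n else 0 := by
  by_cases hy : y = 0
  · subst hy
    simp only [Pi.zero_apply, mul_zero, Finset.sum_const_zero, ZMod.val_zero, pow_zero,
      Finset.sum_const, Finset.card_univ, nsmul_eq_mul, mul_one, if_pos rfl]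
    norm_num [Fintype.card_fun]
  · rw [if_neg hy]
    obtain ⟨i0, hi0⟩ : ∃ i0, y i0 ≠ 0 := by
      by_contra h; push_neg at h; exact hy (funext h)
    have hy1 : y i0 = 1 := by
      have h2 : ∀ a : ZMod 2, a ≠ 0 → a = 1 := by decide
      exact h2 _ hi0
    set e : Fin n → ZMod 2 := fun i => if i = i0 then 1 else 0 with he
    have key : ∀ u : Fin n → ZMod 2,
        (-1 : ℤ) ^ (∑ i, (e + u) i * y i).val = -((-1 : ℤ) ^ (∑ i, u i * y i).val) := by
      intro u
      have h1 : (∑ i, (e + u) i * y i) = 1 + ∑ i, u i * y i := by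
        simp only [Pi.add_apply, add_mul, Finset.sum_add_distrib]
        congr 1
        simp [he, ite_mul, hy1]
      rw [h1, zmod2_pow_add]
      norm_num [ZMod.val_one]
    have hflip : (∑ u : Fin n → ZMod 2, (-1 : ℤ) ^ (∑ i, u i * y i).val)
        = -(∑ u : Fin n → ZMod 2, (-1 : ℤ) ^ (∑ i, u i * y i).val) := by
      conv_lhs => rw [← Equiv.sum_comp (Equiv.addLeft e)
        (fun u => (-1 : ℤ) ^ (∑ i, u i * y i).val)]
      simp only [Equiv.coe_addLeft]
      rw [← Finset.sum_neg_distrib]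
      exact Finset.sum_congr rfl fun u _ => key u
    linarith


lemma fin_sub_val {n : ℕ} [NeZero n] (a b : Fin n) (h : b.val ≤ a.val) :
    (a - b).val = a.val - b.val := by
  rw [Fin.sub_def]
  simp only []
  have hb : b.val < n := b.isLt
  have ha : a.val < n := a.isLt
  have h2 : n - b.val + a.val = (a.val - b.val) + n := by omega
  rw [h2, Nat.add_mod_right, Nat.mod_eq_of_lt (by omega)]

lemma fin_neg_val {n : ℕ} [NeZero n] (a : Fin n) (h : a ≠ 0) :
    (-a).val = n - a.val := by
  have ha : a.val ≠ 0 := fun h0 => h (Fin.ext h0)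
  rw [Fin.neg_def]
  simp only []
  exact Nat.mod_eq_of_lt (by omega)

lemma img_comp {n : ℕ} [NeZero n] (A : Finset (Fin n)) (a b : Fin n) :
    (A.image (· + a)).image (· + b) = A.image (· + (a + b)) := by
  rw [Finset.image_image]
  exact Finset.image_congr fun x _ => by simp [Function.comp, add_assoc]

lemma img_cancel {n : ℕ} [NeZero n] (A : Finset (Fin n)) (a : Fin n) :
    (A.image (· + a)).image (· + (-a)) = A := by
  rw [img_comp]; simp


lemma exists_stab (m : ℕ) (hm : 0 < m) (A : Finset (Fin (2*m)))
    (h : (Finset.univ.image (fun j : Fin (2*m) => A.image (· + j))).card < 2*m) :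
    ∃ c : Fin (2*m), c.val ≠ 0 ∧ c.val ≤ m ∧ A.image (· + c) = A := by
  haveI : NeZero (2*m) := ⟨by omega⟩
  obtain ⟨j, -, j', -, hne, heq⟩ :=
    Finset.exists_ne_map_eq_of_card_lt_of_maps_to
      (s := (Finset.univ : Finset (Fin (2*m))))
      (t := Finset.univ.image (fun j : Fin (2*m) => A.image (· + j)))
      (by rw [Finset.card_univ, Fintype.card_fin]; exact h)
      (fun a ha => Finset.mem_image_of_mem _ ha)

  have hc0 : A.image (· + (j + -j')) = A := by
    have h2 : (A.image (· + j)).image (· + (-j')) = (A.image (· + j')).image (· + (-j')) := by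
      rw [heq]
    rw [img_comp, img_cancel] at h2
    exact h2
  have hjj : j + -j' ≠ 0 := by
    intro h0
    exact hne (by rwa [add_neg_eq_zero] at h0)
  by_cases hle : (j + -j').val ≤ m
  · exact ⟨j + -j', fun h0 => hjj (Fin.ext h0), hle, hc0⟩
  · refine ⟨-(j + -j'), ?_, ?_, ?_⟩
    · rw [fin_neg_val _ hjj]
      have := (j + -j').isLt
      omega
    · rw [fin_neg_val _ hjj]
      omega
    · have h2 := congrArg (fun B : Finset (Fin (2*m)) => B.image (· + (-(j + -j')))) hc0
      simp only [img_cancel] at h2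
      exact h2.symm

lemma low_or_pair (m : ℕ) (hm : 0 < m) (A : Finset (Fin (2*m))) (c : Fin (2*m))
    (hc0 : c.val ≠ 0) (hcm : c.val ≤ m) (hstab : A.image (· + c) = A) (hA : A.Nonempty) :
    (∃ t ∈ A, t.val + 1 < m) ∨
      A = ({⟨m-1, by omega⟩, ⟨2*m-1, by omega⟩} : Finset (Fin (2*m))) := by
  haveI : NeZero (2*m) := ⟨by omega⟩
  set r := A.min' hA with hr
  have hrA : r ∈ A := A.min'_mem hA
  have hsub : ∀ t ∈ A, t - c ∈ A := by
    intro t ht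
    rw [← hstab] at ht
    obtain ⟨a, ha, hac⟩ := Finset.mem_image.mp ht
    have : a = t - c := by rw [← hac]; simp
    rwa [← this]
  have hrc : r.val < c.val := by
    by_contra hge
    push_neg at hge
    have h1 : r - c ∈ A := hsub r hrA
    have h2 := A.min'_le _ h1
    rw [← hr] at h2
    have h3 : (r - c).val = r.val - c.val := fin_sub_val r c hge
    have := Fin.le_def.mp h2
    omega
  by_cases hlow : r.val + 1 < m
  · exact Or.inl ⟨r, hrA, hlow⟩
  · right
    have hrv : r.val = m - 1 := by omega
    have hcv : c.val = m := by omega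
    have hq : r + c = ⟨2*m-1, by omega⟩ := by
      apply Fin.ext
      rw [Fin.val_add]
      have h5 : r.val + c.val = 2*m - 1 := by omega
      rw [h5, Nat.mod_eq_of_lt (by omega)]
    have hqA : r + c ∈ A := by
      rw [← hstab]
      exact Finset.mem_image_of_mem _ hrA
    have hp : r = ⟨m-1, by omega⟩ := Fin.ext hrv
    apply Finset.Subset.antisymm
    · intro t ht
      have hmin : r.val ≤ t.val := Fin.le_def.mp (A.min'_le _ ht)
      simp only [Finset.mem_insert, Finset.mem_singleton]
      by_cases htm : t.val < m
      · left; apply Fin.ext; simp; omega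
      · right
        have h1 : t - c ∈ A := hsub t ht
        have h2 : (t - c).val = t.val - m := by
          rw [fin_sub_val t c (by omega), hcv]
        have h3 := Fin.le_def.mp (A.min'_le _ h1)
        rw [← hr] at h3
        have := t.isLt
        apply Fin.ext
        simp
        omega
    · intro t ht
      simp only [Finset.mem_insert, Finset.mem_singleton] at ht
      rcases ht with h | h
      · rw [h, ← hp]; exact hrA
      · rw [h, ← hq]; exact hqA

lemma image_univ_add {n : ℕ} [NeZero n] (j : Fin n) :
    (Finset.univ : Finset (Fin n)).image (fun k => j + k) = Finset.univ := by
  apply Finset.eq_univ_of_forall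
  intro y
  exact Finset.mem_image.mpr ⟨-j + y, Finset.mem_univ _, by rw [← add_assoc, add_neg_cancel, zero_add]⟩

lemma orbit_reparam {n : ℕ} [NeZero n] (A : Finset (Fin n)) (j : Fin n) :
    Finset.univ.image (fun k : Fin n => (A.image (· + j)).image (· + k))
      = Finset.univ.image (fun k : Fin n => A.image (· + k)) := by
  ext X
  simp only [Finset.mem_image, Finset.mem_univ, true_and]
  constructor
  · rintro ⟨k, rfl⟩
    exact ⟨j + k, by rw [img_comp]⟩
  · rintro ⟨k, rfl⟩
    refine ⟨-j + k, ?_⟩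
    rw [img_comp]
    congr 1
    rw [← add_assoc, add_neg_cancel, zero_add]

lemma half_image {m : ℕ} (hm : 0 < m) {β : Type*} [DecidableEq β] (G : Fin (2*m) → β)
    (cm : Fin (2*m)) (hcmval : cm.val = m)
    (hG : ∀ a, G (a + cm) = G a) :
    haveI : NeZero (2*m) := ⟨by omega⟩
    (Finset.univ : Finset (Fin (2*m))).image G
      = (Finset.univ : Finset (Fin m)).image
          (fun b : Fin m => G ⟨b.val, Nat.lt_of_lt_of_le b.isLt (by omega)⟩) := by
  haveI : NeZero (2*m) := ⟨by omega⟩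
  ext X
  simp only [Finset.mem_image, Finset.mem_univ, true_and]
  constructor
  · rintro ⟨a, rfl⟩
    by_cases ham : a.val < m
    · refine ⟨⟨a.val, ham⟩, ?_⟩
      congr 1
    · refine ⟨⟨a.val - m, by have := a.isLt; omega⟩, ?_⟩
      have hsub : (⟨(⟨a.val - m, by have := a.isLt; omega⟩ : Fin m).val,
          by have := a.isLt; omega⟩ : Fin (2*m)) = a - cm := by
        apply Fin.ext
        rw [fin_sub_val a cm (by omega)]
        show a.val - m = a.val - cm.val
        rw [hcmval]
      rw [hsub]
      calc G (a - cm) = G (a - cm + cm) := (hG _).symm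
        _ = G a := by rw [sub_add_cancel]
  · rintro ⟨b, rfl⟩
    exact ⟨_, rfl⟩

lemma pair_orbit_sum (m : ℕ) (hm : 0 < m) (x : Fin (2*m) → ZMod 2) :
    ∑ T ∈ Finset.univ.image
        (fun k : Fin (2*m) =>
          (({⟨m-1, by omega⟩, ⟨2*m-1, by omega⟩} : Finset (Fin (2*m))).image (· + k))),
      ∏ t ∈ T, x t
    = ∑ b : Fin m, x ⟨b.val, Nat.lt_of_lt_of_le b.isLt (by omega)⟩
        * x ⟨m + b.val, Nat.lt_of_lt_of_le (Nat.add_lt_add_left b.isLt m) (by omega)⟩ := by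
  haveI : NeZero (2*m) := ⟨by omega⟩
  obtain ⟨cm, hcmval⟩ : ∃ cm : Fin (2*m), cm.val = m := ⟨⟨m, by omega⟩, rfl⟩
  obtain ⟨p, hpval⟩ : ∃ p : Fin (2*m), p.val = m - 1 := ⟨⟨m-1, by omega⟩, rfl⟩
  obtain ⟨g, hgdef⟩ : ∃ g : Fin (2*m) → Finset (Fin (2*m)),
      ∀ a, g a = {a, a + cm} := ⟨_, fun a => rfl⟩
  have hcm2 : ∀ a : Fin (2*m), a + cm + cm = a := by
    intro a
    have h0 : cm + cm = 0 := by
      apply Fin.ext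
      rw [Fin.val_add, hcmval, Fin.val_zero, two_mul]
      exact Nat.mod_self _
    rw [add_assoc, h0, add_zero]
  have hgper : ∀ a, g (a + cm) = g a := by
    intro a
    rw [hgdef, hgdef, hcm2, Finset.pair_comm]
  have hpq : (⟨m-1, by omega⟩ : Fin (2*m)) = p ∧ (⟨2*m-1, by omega⟩ : Fin (2*m)) = p + cm := by
    constructor
    · exact (Fin.ext hpval.symm)
    · apply Fin.ext
      rw [Fin.val_add, hpval]
      have h9 : (m - 1 + cm.val) % (2*m) = 2*m-1 := by
        rw [hcmval, Nat.mod_eq_of_lt (by omega)]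
        omega
      rw [h9]
  have himg : ∀ k : Fin (2*m),
      (({⟨m-1, by omega⟩, ⟨2*m-1, by omega⟩} : Finset (Fin (2*m))).image (· + k)) = g (p + k) := by
    intro k
    rw [Finset.image_insert, Finset.image_singleton, hpq.1, hpq.2, hgdef]
    congr 1
    rw [add_right_comm]
  have horb1 : Finset.univ.image
      (fun k : Fin (2*m) =>
        (({⟨m-1, by omega⟩, ⟨2*m-1, by omega⟩} : Finset (Fin (2*m))).image (· + k)))
      = Finset.univ.image g := by
    ext X
    simp only [Finset.mem_image, Finset.mem_univ, true_and]
    constructor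
    · rintro ⟨k, rfl⟩
      exact ⟨p + k, (himg k).symm⟩
    · rintro ⟨a, rfl⟩
      refine ⟨-p + a, ?_⟩
      rw [himg]
      congr 1
      rw [← add_assoc, add_neg_cancel, zero_add]
  rw [horb1, half_image hm g cm hcmval hgper]
  rw [Finset.sum_image ?hinj]
  case hinj =>
    intro b _ b' _ hbe
    beta_reduce at hbe
    rw [hgdef, hgdef] at hbe
    have hmem : (⟨b.val, Nat.lt_of_lt_of_le b.isLt (by omega)⟩ : Fin (2*m)) ∈
        ({(⟨b'.val, Nat.lt_of_lt_of_le b'.isLt (by omega)⟩ : Fin (2*m)),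
          (⟨b'.val, Nat.lt_of_lt_of_le b'.isLt (by omega)⟩ : Fin (2*m)) + cm} : Finset (Fin (2*m))) := by
      rw [← hbe]; exact Finset.mem_insert_self _ _
    simp only [Finset.mem_insert, Finset.mem_singleton] at hmem
    rcases hmem with he | he
    · exact Fin.ext (by simpa using congrArg Fin.val he)
    · exfalso
      have hv := congrArg Fin.val he
      have hv' : b.val = (b'.val + cm.val) % (2*m) := hv.trans (Fin.val_add _ _)
      rw [hcmval, Nat.mod_eq_of_lt (by have := b'.isLt; omega)] at hv'
      have := b.isLt
      have := b'.isLt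
      omega
  apply Finset.sum_congr rfl
  intro b _
  rw [hgdef]
  have hne : (⟨b.val, Nat.lt_of_lt_of_le b.isLt (by omega)⟩ : Fin (2*m)) ≠
      (⟨b.val, Nat.lt_of_lt_of_le b.isLt (by omega)⟩ : Fin (2*m)) + cm := by
    intro he
    have hv := congrArg Fin.val he
    have hv' : b.val = (b.val + cm.val) % (2*m) := hv.trans (Fin.val_add _ _)
    rw [hcmval, Nat.mod_eq_of_lt (by have := b.isLt; omega)] at hv'
    omega
  rw [Finset.prod_pair hne]
  congr 1
  apply congrArg
  apply Fin.ext
  show (b.val + cm.val) % (2*m) = m + b.val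
  rw [hcmval, Nat.mod_eq_of_lt (by have := b.isLt; omega)]
  omega

lemma card_filter_high (m : ℕ) (hm : 0 < m) :
    (Finset.univ.filter (fun i : Fin (2*m) => ¬(i.val + 1 < m))).card = m + 1 := by
  rw [Finset.card_filter]
  rw [Fin.sum_univ_eq_sum_range (fun j => if ¬(j + 1 < m) then 1 else 0) (2*m)]
  rw [← Finset.card_filter]
  have h1 : (Finset.range (2*m)).filter (fun j => ¬(j + 1 < m)) = Finset.Ico (m-1) (2*m) := by
    ext j
    simp only [Finset.mem_filter, Finset.mem_range, Finset.mem_Ico]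
    omega
  rw [h1, Nat.card_Ico]
  omega

lemma card_V (m : ℕ) (hm : 0 < m) :
    (Finset.univ.filter
      (fun x : Fin (2*m) → ZMod 2 => ∀ i : Fin (2*m), i.val + 1 < m → x i = 0)).card
      = 2^(m+1) := by
  have h1 : Finset.univ.filter
      (fun x : Fin (2*m) → ZMod 2 => ∀ i : Fin (2*m), i.val + 1 < m → x i = 0)
      = Fintype.piFinset (fun i : Fin (2*m) =>
          if i.val + 1 < m then ({0} : Finset (ZMod 2)) else Finset.univ) := by
    ext x
    simp only [Finset.mem_filter, Finset.mem_univ, true_and, Fintype.mem_piFinset]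
    constructor
    · intro h i
      by_cases hi : i.val + 1 < m
      · simp [hi, h i hi]
      · simp [hi]
    · intro h i hi
      have := h i
      simpa [hi] using this
  rw [h1, Fintype.card_piFinset]
  have h2 : ∀ i : Fin (2*m),
      (if i.val + 1 < m then ({0} : Finset (ZMod 2)) else Finset.univ).card
        = if i.val + 1 < m then 1 else 2 := by
    intro i
    by_cases hi : i.val + 1 < m <;> simp [hi]
  rw [Finset.prod_congr rfl (fun i _ => h2 i)]
  rw [← Finset.prod_filter_mul_prod_filter_not Finset.univ (fun i : Fin (2*m) => i.val + 1 < m)]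
  rw [Finset.prod_congr rfl (fun i hi => if_pos (Finset.mem_filter.mp hi).2),
      Finset.prod_congr rfl (fun i hi => if_neg (Finset.mem_filter.mp hi).2)]
  rw [Finset.prod_const, Finset.prod_const, card_filter_high m hm]
  simp

/-- Let `n = 2m` and `f = ⊕_i f_i` be a sum of short-cycle MRS functions
(each with fewer than `n` monomials). If `f` is bent, then one of the `f_i` equals
`f₀ = ⊕_{i=0}^{m-1} x_i x_{m+i}`. -/
theorem stmt14 (m s : ℕ) (hm : 0 < m) (S : Fin s → Finset (Fin (2*m)))
    (hshort : ∀ i, (Finset.univ.image (fun j : Fin (2*m) => (S i).image (· + j))).card < 2*m)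
    (hbent : ∀ w : Fin (2*m) → ZMod 2,
      (∑ x : Fin (2*m) → ZMod 2,
        (-1 : ℤ) ^ (((∑ i : Fin s, ∑ T ∈ Finset.univ.image
              (fun j : Fin (2*m) => (S i).image (· + j)), ∏ t ∈ T, x t)
          + ∑ i, w i * x i).val)) = 2 ^ m ∨
      (∑ x : Fin (2*m) → ZMod 2,
        (-1 : ℤ) ^ (((∑ i : Fin s, ∑ T ∈ Finset.univ.image
              (fun j : Fin (2*m) => (S i).image (· + j)), ∏ t ∈ T, x t)
          + ∑ i, w i * x i).val)) = -(2 ^ m)) :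
    ∃ i : Fin s, ∀ x : Fin (2*m) → ZMod 2,
      (∑ T ∈ Finset.univ.image (fun j : Fin (2*m) => (S i).image (· + j)), ∏ t ∈ T, x t)
        = ∑ i : Fin m, x ⟨i.val, by have := i.isLt; omega⟩ *
            x ⟨m + i.val, by have := i.isLt; omega⟩ := by
  haveI : NeZero (2*m) := ⟨by omega⟩
  haveI : Nonempty (Fin (2*m)) := ⟨⟨0, by omega⟩⟩
  by_cases hex : ∃ i : Fin s,
      ({⟨m-1, by omega⟩, ⟨2*m-1, by omega⟩} : Finset (Fin (2*m))) ∈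
        Finset.univ.image (fun j : Fin (2*m) => (S i).image (· + j))
  · obtain ⟨i, hmem⟩ := hex
    refine ⟨i, fun x => ?_⟩
    obtain ⟨j0, -, hj0⟩ := Finset.mem_image.mp hmem
    have h1 := orbit_reparam (S i) j0
    simp only [hj0] at h1
    rw [← h1]
    exact pair_orbit_sum m hm x
  · exfalso
    push_neg at hex
    -- every nonempty monomial has a low variable
    have hlowT : ∀ i : Fin s, ∀ T ∈ Finset.univ.image
        (fun j : Fin (2*m) => (S i).image (· + j)), T.Nonempty → ∃ t ∈ T, t.val + 1 < m := by
      intro i T hT hTne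
      obtain ⟨c, hc0, hcle, hstab⟩ := exists_stab m hm (S i) (hshort i)
      obtain ⟨j, -, hj⟩ := Finset.mem_image.mp hT
      have hstabT : T.image (· + c) = T := by
        rw [← hj, img_comp, add_comm j c, ← img_comp, hstab]
      rcases low_or_pair m hm T c hc0 hcle hstabT hTne with h | h
      · exact h
      · exact absurd (h ▸ hT) (hex i)
    -- the function is constant on V
    set F : (Fin (2*m) → ZMod 2) → ZMod 2 := fun x =>
      ∑ i : Fin s, ∑ T ∈ Finset.univ.image
        (fun j : Fin (2*m) => (S i).image (· + j)), ∏ t ∈ T, x t with hF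
    set ε : ZMod 2 := ∑ i : Fin s, (if S i = ∅ then (1 : ZMod 2) else 0) with hε
    have hval : ∀ x : Fin (2*m) → ZMod 2,
        (∀ i : Fin (2*m), i.val + 1 < m → x i = 0) → F x = ε := by
      intro x hx
      rw [hF, hε]
      apply Finset.sum_congr rfl
      intro i _
      by_cases hSi : S i = ∅
      · rw [if_pos hSi, hSi]
        have himg : Finset.univ.image
            (fun j : Fin (2*m) => (∅ : Finset (Fin (2*m))).image (· + j))
            = ({∅} : Finset (Finset (Fin (2*m)))) := by
          simp only [Finset.image_empty]
          exact Finset.image_const Finset.univ_nonempty _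
        rw [himg, Finset.sum_singleton, Finset.prod_empty]
      · rw [if_neg hSi]
        apply Finset.sum_eq_zero
        intro T hT
        have hTne : T.Nonempty := by
          obtain ⟨j, -, hj⟩ := Finset.mem_image.mp hT
          rw [← hj]
          exact (Finset.image_nonempty).mpr (Finset.nonempty_iff_ne_empty.mpr hSi)
        obtain ⟨t, ht, htl⟩ := hlowT i T hT hTne
        exact Finset.prod_eq_zero ht (hx t htl)
    -- mask
    set mask : (Fin (2*m) → ZMod 2) → (Fin (2*m) → ZMod 2) :=
      fun u i => if i.val + 1 < m then u i else 0 with hmask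
    -- the double sum
    set Total : ℤ := ∑ u : Fin (2*m) → ZMod 2, ∑ x : Fin (2*m) → ZMod 2,
      (-1 : ℤ) ^ ((F x + ∑ i, mask u i * x i).val) with hTotal
    -- upper bound from bentness
    have hub : |Total| ≤ 2^(2*m) * 2^m := by
      rw [hTotal]
      calc |∑ u : Fin (2*m) → ZMod 2, ∑ x : Fin (2*m) → ZMod 2,
            (-1 : ℤ) ^ ((F x + ∑ i, mask u i * x i).val)|
          ≤ ∑ u : Fin (2*m) → ZMod 2, |∑ x : Fin (2*m) → ZMod 2,
            (-1 : ℤ) ^ ((F x + ∑ i, mask u i * x i).val)| :=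
            Finset.abs_sum_le_sum_abs _ _
        _ ≤ ∑ _u : Fin (2*m) → ZMod 2, (2:ℤ)^m := by
            apply Finset.sum_le_sum
            intro u _
            rcases hbent (mask u) with h | h
            · rw [h]
              rw [abs_of_nonneg (by positivity)]
            · rw [h, abs_neg, abs_of_nonneg (by positivity)]
        _ = 2^(2*m) * 2^m := by
            rw [Finset.sum_const, Finset.card_univ]
            simp only [nsmul_eq_mul]
            norm_num [Fintype.card_fun]
    -- evaluate Total
    have heval : Total = 2^(2*m) * ((-1:ℤ)^(ε.val) * 2^(m+1)) := by
      rw [hTotal, Finset.sum_comm]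
      have hx1 : ∀ x : Fin (2*m) → ZMod 2,
          (∑ u : Fin (2*m) → ZMod 2, (-1 : ℤ) ^ ((F x + ∑ i, mask u i * x i).val))
          = (-1:ℤ)^((F x).val) *
              (if mask x = 0 then (2:ℤ)^(2*m) else 0) := by
        intro x
        have hsw : ∀ u : Fin (2*m) → ZMod 2,
            (∑ i, mask u i * x i) = ∑ i, u i * mask x i := by
          intro u
          apply Finset.sum_congr rfl
          intro i _
          rw [hmask]
          by_cases hi : i.val + 1 < m <;> simp [hi]
        calc (∑ u : Fin (2*m) → ZMod 2, (-1 : ℤ) ^ ((F x + ∑ i, mask u i * x i).val))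
            = ∑ u : Fin (2*m) → ZMod 2,
                (-1:ℤ)^((F x).val) * (-1:ℤ)^((∑ i, u i * mask x i).val) := by
              apply Finset.sum_congr rfl
              intro u _
              rw [hsw u, zmod2_pow_add]
          _ = (-1:ℤ)^((F x).val) *
                ∑ u : Fin (2*m) → ZMod 2, (-1:ℤ)^((∑ i, u i * mask x i).val) := by
              rw [Finset.mul_sum]
          _ = (-1:ℤ)^((F x).val) * (if mask x = 0 then (2:ℤ)^(2*m) else 0) := by
              rw [orth (mask x)]
      rw [Finset.sum_congr rfl (fun x _ => hx1 x)]
      have hsplit : (∑ x : Fin (2*m) → ZMod 2,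
          (-1:ℤ)^((F x).val) * (if mask x = 0 then (2:ℤ)^(2*m) else 0))
          = ∑ x ∈ Finset.univ.filter (fun x : Fin (2*m) → ZMod 2 => mask x = 0),
              (-1:ℤ)^((F x).val) * (2:ℤ)^(2*m) := by
        rw [Finset.sum_filter]
        apply Finset.sum_congr rfl
        intro x _
        by_cases hx : mask x = 0 <;> simp [hx]
      rw [hsplit]
      have hmask0 : ∀ x : Fin (2*m) → ZMod 2,
          mask x = 0 ↔ (∀ i : Fin (2*m), i.val + 1 < m → x i = 0) := by
        intro x
        constructor
        · intro h i hi
          have := congrFun h i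
          simpa [hmask, hi] using this
        · intro h
          funext i
          rw [hmask]
          by_cases hi : i.val + 1 < m
          · simp [hi, h i hi]
          · simp [hi]
      have hfilter : Finset.univ.filter (fun x : Fin (2*m) → ZMod 2 => mask x = 0)
          = Finset.univ.filter
              (fun x : Fin (2*m) → ZMod 2 => ∀ i : Fin (2*m), i.val + 1 < m → x i = 0) := by
        apply Finset.filter_congr
        intro x _
        simp only [hmask0 x]
      rw [hfilter]
      have hconst : ∀ x ∈ Finset.univ.filter
          (fun x : Fin (2*m) → ZMod 2 => ∀ i : Fin (2*m), i.val + 1 < m → x i = 0),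
          (-1:ℤ)^((F x).val) * (2:ℤ)^(2*m) = (-1:ℤ)^(ε.val) * (2:ℤ)^(2*m) := by
        intro x hx
        rw [hval x (Finset.mem_filter.mp hx).2]
      rw [Finset.sum_congr rfl hconst, Finset.sum_const, card_V m hm]
      simp only [nsmul_eq_mul]
      push_cast
      ring
    -- contradiction
    rw [heval] at hub
    have habs : |(2:ℤ)^(2*m) * ((-1:ℤ)^(ε.val) * 2^(m+1))| = 2^(2*m) * 2^(m+1) := by
      simp [abs_mul, abs_pow]
    rw [habs] at hub
    have h2m : (0:ℤ) < 2^(2*m) := by positivity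
    have hpow : (2:ℤ)^m < 2^(m+1) := by
      rw [pow_succ]
      have : (0:ℤ) < 2^m := by positivity
      linarith
    nlinarith [h2m, hpow]
end

section
/- Let n = 2p with p > 2 prime. If f : 𝔽₂ⁿ → 𝔽₂ is a rotation symmetric bent function, then f(0,…,0) ≠ f(1,…,1), i.e., (-1)^{f(v₀)} = -(-1)^{f(v_{2ⁿ-1})}. -/
open Finset
open Fin.NatCast

lemma iterate_fix_of_iterate {X : Type*} {T : X → X} {p : ℕ} (hTp : ∀ x, T^[p] x = x)
    (k : ℕ) (x : X) : T^[p * k] x = x := by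
  induction k with
  | zero => simp
  | succ n ih =>
    rw [Nat.mul_succ, Function.iterate_add_apply, hTp, ih]

lemma orbit_sum {X : Type*} [Fintype X] [DecidableEq X] {p : ℕ} (hp : p.Prime)
    (T : X → X) (hTp : ∀ x, T^[p] x = x) (g : X → ℤ) (hg : ∀ x, g (T x) = g x) :
    ((∑ x, g x : ℤ) : ZMod p) =
      ∑ x ∈ Finset.univ.filter (fun x => T x = x), ((g x : ℤ) : ZMod p) := by
  classical
  have hp1 : 1 ≤ p := hp.one_lt.le.trans' (by norm_num)
  -- T is injective
  have hTinj : Function.Injective T := by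
    intro a b hab
    have h2 : T^[p-1] (T a) = T^[p-1] (T b) := by rw [hab]
    rwa [← Function.iterate_succ_apply, ← Function.iterate_succ_apply,
      show (p-1).succ = p by omega, hTp, hTp] at h2
  have hTkinj : ∀ k : ℕ, Function.Injective (T^[k]) := fun k => hTinj.iterate k
  have hgk : ∀ (k : ℕ) (x : X), g (T^[k] x) = g x := by
    intro k
    induction k with
    | zero => intro x; rfl
    | succ n ih => intro x; rw [Function.iterate_succ_apply, ih, hg]
  -- key: if T^[d] x = x with ¬ p ∣ d then T x = x
  have hkey : ∀ (d : ℕ) (x : X), ¬ (p ∣ d) → T^[d] x = x → T x = x := by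
    intro d x hpd hd
    have hiter : ∀ e : ℕ, T^[d * e] x = x := by
      intro e
      rw [Function.iterate_mul]
      induction e with
      | zero => rfl
      | succ n ih => rw [Function.iterate_succ_apply, hd, ih]
    have hdz : (d : ZMod p) ≠ 0 := by
      rwa [Ne, ZMod.natCast_eq_zero_iff]
    haveI : Fact p.Prime := ⟨hp⟩
    set e := ((d : ZMod p)⁻¹).val with he
    have hde : (d * e : ℕ) % p = 1 % p := by
      have h3 : ((d * e : ℕ) : ZMod p) = 1 := by
        push_cast [he, ZMod.natCast_val, ZMod.cast_id]
        field_simp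
      exact (ZMod.natCast_eq_natCast_iff _ _ _).1 (by rw [h3]; push_cast; ring)
    rw [Nat.one_mod_eq_one.mpr hp.one_lt.ne'] at hde
    obtain ⟨q, hq⟩ : ∃ q, d * e = p * q + 1 := by
      refine ⟨d * e / p, ?_⟩
      have := Nat.div_add_mod (d * e) p
      omega
    have h4 := hiter e
    rw [hq, Nat.add_comm, Function.iterate_add_apply, Function.iterate_one,
      iterate_fix_of_iterate hTp] at h4
    exact h4
  -- orbit
  set orb : X → Finset X := fun x => Finset.image (fun k : Fin p => T^[(k : ℕ)] x) univ with horb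
  have hmemorb : ∀ x, x ∈ orb x := by
    intro x
    simp only [horb, mem_image]
    exact ⟨⟨0, by omega⟩, mem_univ _, rfl⟩
  set s : Finset X := univ.filter (fun x => T x ≠ x) with hs
  -- orbit of a non-fixed point lies in s
  have horbs : ∀ x ∈ s, ∀ y ∈ orb x, y ∈ s := by
    intro x hx y hy
    simp only [horb, mem_image] at hy
    obtain ⟨k, -, hk⟩ := hy
    simp only [hs, mem_filter, mem_univ, true_and] at hx ⊢
    intro hTy
    apply hx
    apply hTkinj (k : ℕ)
    have : T (T^[(k:ℕ)] x) = T^[(k:ℕ)] (T x) := (Function.Commute.iterate_self T (k:ℕ) x).symm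
    rw [hk] at this ⊢
    rw [hTy] at this
    exact this.symm ▸ rfl
  -- orbit of non-fixed point has card p
  have horbcard : ∀ x ∈ s, (orb x).card = p := by
    intro x hx
    simp only [hs, mem_filter, mem_univ, true_and] at hx
    rw [horb]
    rw [Finset.card_image_of_injective _ ?_, Finset.card_univ, Fintype.card_fin]
    intro k l hkl
    rcases le_total (k : ℕ) (l : ℕ) with h | h
    · have h5 : T^[(k:ℕ)] (T^[(l:ℕ) - (k:ℕ)] x) = T^[(k:ℕ)] x := by
        rw [← Function.iterate_add_apply]
        rw [show (k:ℕ) + ((l:ℕ) - (k:ℕ)) = (l:ℕ) by omega]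
        exact hkl.symm
      have h6 := hTkinj (k:ℕ) h5
      by_contra hne
      have hlt : 0 < (l:ℕ) - (k:ℕ) := by
        have : (k:ℕ) ≠ (l:ℕ) := fun hc => hne (Fin.ext hc)
        omega
      exact hx (hkey _ x (fun hdvd => by have := Nat.le_of_dvd hlt hdvd; have := l.isLt; omega) h6)
    · have h5 : T^[(l:ℕ)] (T^[(k:ℕ) - (l:ℕ)] x) = T^[(l:ℕ)] x := by
        rw [← Function.iterate_add_apply]
        rw [show (l:ℕ) + ((k:ℕ) - (l:ℕ)) = (k:ℕ) by omega]
        exact hkl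
      have h6 := hTkinj (l:ℕ) h5
      by_contra hne
      have hlt : 0 < (k:ℕ) - (l:ℕ) := by
        have : (k:ℕ) ≠ (l:ℕ) := fun hc => hne (Fin.ext hc)
        omega
      exact hx (hkey _ x (fun hdvd => by have := Nat.le_of_dvd hlt hdvd; have := k.isLt; omega) h6)
  -- iterate mod p
  have hmod : ∀ (m : ℕ) (x : X), T^[m] x = T^[m % p] x := by
    intro m x
    have hfix : T^[p * (m / p)] x = x := iterate_fix_of_iterate hTp _ x
    conv_lhs => rw [← Nat.div_add_mod m p, Nat.add_comm (p * (m / p)) (m % p),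
      Function.iterate_add_apply, hfix]
  -- orbits of points in the same orbit coincide
  have horbeq : ∀ x ∈ s, ∀ y ∈ orb x, orb y = orb x := by
    intro x hx y hy
    have hys := horbs x hx y hy
    apply Finset.eq_of_subset_of_card_le
    · intro z hz
      simp only [horb, mem_image] at hy hz ⊢
      obtain ⟨k, -, hk⟩ := hy
      obtain ⟨j, -, hj⟩ := hz
      refine ⟨⟨((j:ℕ) + (k:ℕ)) % p, Nat.mod_lt _ (by omega)⟩, mem_univ _, ?_⟩
      simp only
      rw [← hmod, Function.iterate_add_apply, hk, hj]
    · rw [horbcard x hx, horbcard y hys]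
  -- now the sum
  push_cast
  rw [← Finset.sum_filter_add_sum_filter_not univ (fun x => T x = x)
    (fun x => ((g x : ℤ) : ZMod p))]
  suffices h : ∑ x ∈ univ.filter (fun x => ¬ T x = x), ((g x : ℤ) : ZMod p) = 0 by
    rw [h, add_zero]
  have hmaps : ∀ x ∈ s, orb x ∈ s.image orb := fun x hx => Finset.mem_image_of_mem _ hx
  rw [show univ.filter (fun x => ¬ T x = x) = s from rfl]
  rw [← Finset.sum_fiberwise_of_maps_to hmaps (fun x => ((g x : ℤ) : ZMod p))]
  apply Finset.sum_eq_zero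
  intro b hb
  obtain ⟨x0, hx0, hbx0⟩ := Finset.mem_image.1 hb
  have hfib : s.filter (fun y => orb y = b) = b := by
    ext y
    simp only [mem_filter]
    constructor
    · rintro ⟨hy, hyb⟩
      rw [← hyb]
      exact hmemorb y
    · intro hyb
      rw [← hbx0] at hyb
      exact ⟨horbs x0 hx0 y hyb, by rw [← hbx0]; exact horbeq x0 hx0 y hyb⟩
  rw [hfib, ← hbx0]
  have hconst : ∀ y ∈ orb x0, ((g y : ℤ) : ZMod p) = ((g x0 : ℤ) : ZMod p) := by
    intro y hy
    simp only [horb, mem_image] at hy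
    obtain ⟨k, -, hk⟩ := hy
    rw [← hk, hgk]
  rw [Finset.sum_congr rfl hconst, Finset.sum_const, horbcard x0 hx0]
  simp [ZMod.natCast_self]



/-- For `n = 2p`, `p > 2` prime, any rotation symmetric bent function
`f` satisfies `f(0,…,0) ≠ f(1,…,1)`. -/
theorem stmt15 (p : ℕ) (hp : p.Prime) (hp2 : 2 < p)
    (f : (Fin (2*p) → ZMod 2) → ZMod 2)
    (hrot : ∀ x : Fin (2*p) → ZMod 2, f (fun t => x (t + ⟨1, by omega⟩)) = f x)
    (hbent : ∀ w : Fin (2*p) → ZMod 2,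
      (∑ x : Fin (2*p) → ZMod 2, (-1 : ℤ) ^ ((f x + ∑ i, w i * x i).val)) = 2 ^ p ∨
      (∑ x : Fin (2*p) → ZMod 2, (-1 : ℤ) ^ ((f x + ∑ i, w i * x i).val)) = -(2 ^ p)) :
    f (fun _ => 0) ≠ f (fun _ => 1) := by
  haveI : NeZero (2*p) := ⟨by omega⟩
  haveI : Fact p.Prime := ⟨hp⟩
  have h1 : (⟨1, by omega⟩ : Fin (2*p)) = 1 := by
    apply Fin.ext
    simp only [Fin.val_one']
    rw [Nat.mod_eq_of_lt (by omega)]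
  have hrot1 : ∀ x : Fin (2*p) → ZMod 2, f (fun t => x (t + 1)) = f x := by
    intro x
    rw [← h1]
    exact hrot x
  set T : (Fin (2*p) → ZMod 2) → (Fin (2*p) → ZMod 2) :=
    fun x => fun t => x (t + 1 + 1) with hT
  have hfT : ∀ x, f (T x) = f x := by
    intro x
    have h2 := hrot1 (fun t => x (t + 1))
    have h3 := hrot1 x
    rw [h3] at h2
    exact h2
  -- iterate formula
  have hTk : ∀ (k : ℕ) (x : Fin (2*p) → ZMod 2), T^[k] x = fun t => x (t + (2*k : ℕ)) := by
    intro k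
    induction k with
    | zero => intro x; funext t; simp
    | succ n ih =>
      intro x
      rw [Function.iterate_succ_apply, ih]
      funext t
      show x (t + (2*n : ℕ) + 1 + 1) = x (t + ((2*(n+1) : ℕ) : Fin (2*p)))
      congr 1
      rw [show 2*(n+1) = 2*n+1+1 by ring, Nat.cast_succ, Nat.cast_succ]
      simp only [add_assoc]
  have hTp : ∀ x, T^[p] x = x := by
    intro x
    rw [hTk]
    funext t
    rw [show ((2*p : ℕ) : Fin (2*p)) = 0 from Fin.natCast_self (2*p), add_zero]
  -- casts mod 2
  have hcast : ∀ m : ℕ, ((m % (2*p) : ℕ) : ZMod 2) = (m : ZMod 2) := by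
    intro m
    rw [ZMod.natCast_eq_natCast_iff]
    exact (Nat.mod_modEq m (2*p)).of_dvd ⟨p, rfl⟩
  have hvaladd : ∀ s t : Fin (2*p), (((s+t).val : ℕ) : ZMod 2) = (s.val : ZMod 2) + (t.val : ZMod 2) := by
    intro s t
    rw [Fin.val_add, hcast]
    push_cast
    ring
  have hval1 : ((1 : Fin (2*p)).val : ℕ) = 1 := by
    simp only [Fin.val_one']
    exact Nat.mod_eq_of_lt (by omega)
  -- the four fixed points
  set v0 : Fin (2*p) → ZMod 2 := fun _ => 0 with hv0
  set v1 : Fin (2*p) → ZMod 2 := fun _ => 1 with hv1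
  set a0 : Fin (2*p) → ZMod 2 := fun t => ((t.val : ℕ) : ZMod 2) with ha0
  set a1 : Fin (2*p) → ZMod 2 := fun t => ((t.val : ℕ) : ZMod 2) + 1 with ha1
  have hzmod2 : ∀ c : ZMod 2, c = 0 ∨ c = 1 := by decide
  have hfix : Finset.univ.filter (fun x => T x = x) = {v0, v1, a0, a1} := by
    ext x
    simp only [Finset.mem_filter, Finset.mem_univ, true_and, Finset.mem_insert,
      Finset.mem_singleton]
    constructor
    · intro hx
      -- x is constant on parity classes
      have hxk : ∀ k : ℕ, T^[k] x = x := by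
        intro k
        induction k with
        | zero => rfl
        | succ n ih => rw [Function.iterate_succ_apply, hx, ih]
      have hgen : ∀ (k : ℕ) (t : Fin (2*p)), x (t + ((2*k : ℕ) : Fin (2*p))) = x t := by
        intro k t
        conv_rhs => rw [← hxk k, hTk]
      have heven : ∀ t : Fin (2*p), t.val % 2 = 0 → x t = x 0 := by
        intro t ht
        have := hgen (t.val / 2) 0
        rw [show (0 : Fin (2*p)) + ((2*(t.val/2) : ℕ) : Fin (2*p)) = t from ?_] at this
        · exact this
        · apply Fin.ext
          have hlt := t.isLt
          have h2 : ((2*(t.val/2) : ℕ) : Fin (2*p)).val = 2*(t.val/2) := by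
            rw [Fin.val_natCast, Nat.mod_eq_of_lt (by omega)]
          rw [Fin.val_add, h2, Fin.val_zero, Nat.zero_add, Nat.mod_eq_of_lt (by omega)]
          omega
      have hodd : ∀ t : Fin (2*p), t.val % 2 = 1 → x t = x 1 := by
        intro t ht
        have := hgen (t.val / 2) 1
        rw [show (1 : Fin (2*p)) + ((2*(t.val/2) : ℕ) : Fin (2*p)) = t from ?_] at this
        · exact this
        · apply Fin.ext
          have hlt := t.isLt
          have h2 : ((2*(t.val/2) : ℕ) : Fin (2*p)).val = 2*(t.val/2) := by
            rw [Fin.val_natCast, Nat.mod_eq_of_lt (by omega)]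
          rw [Fin.val_add, h2, hval1, Nat.mod_eq_of_lt (by omega)]
          omega
      have ha0even : ∀ t : Fin (2*p), t.val % 2 = 0 → ((t.val : ℕ) : ZMod 2) = 0 := by
        intro t ht
        obtain ⟨m, hm⟩ : ∃ m, t.val = 2*m := ⟨t.val/2, by omega⟩
        rw [hm]
        exact (ZMod.natCast_eq_zero_iff _ _).2 ⟨m, rfl⟩
      have ha0odd : ∀ t : Fin (2*p), t.val % 2 = 1 → ((t.val : ℕ) : ZMod 2) = 1 := by
        intro t ht
        obtain ⟨m, hm⟩ : ∃ m, t.val = 2*m+1 := ⟨t.val/2, by omega⟩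
        rw [hm, show ((2*m+1 : ℕ) : ZMod 2) = ((2*m : ℕ) : ZMod 2) + 1 from by push_cast; ring,
          (ZMod.natCast_eq_zero_iff _ _).2 ⟨m, rfl⟩, zero_add]
      rcases hzmod2 (x 0) with h00 | h01 <;> rcases hzmod2 (x 1) with h10 | h11
      · left; funext t
        rcases Nat.mod_two_eq_zero_or_one t.val with ht | ht
        · rw [heven t ht, h00]
        · rw [hodd t ht, h10]
      · right; right; left; funext t
        show x t = ((t.val : ℕ) : ZMod 2)
        rcases Nat.mod_two_eq_zero_or_one t.val with ht | ht
        · rw [heven t ht, h00, ha0even t ht]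
        · rw [hodd t ht, h11, ha0odd t ht]
      · right; right; right; funext t
        show x t = ((t.val : ℕ) : ZMod 2) + 1
        rcases Nat.mod_two_eq_zero_or_one t.val with ht | ht
        · rw [heven t ht, h01, ha0even t ht, zero_add]
        · rw [hodd t ht, h10, ha0odd t ht]
          decide
      · right; left; funext t
        rcases Nat.mod_two_eq_zero_or_one t.val with ht | ht
        · rw [heven t ht, h01]
        · rw [hodd t ht, h11]
    · intro hx
      have hstep : ∀ t : Fin (2*p), a0 (t + 1 + 1) = a0 t := by
        intro t
        show (((t+1+1 : Fin (2*p)).val : ℕ) : ZMod 2) = ((t.val : ℕ) : ZMod 2)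
        rw [hvaladd, hvaladd, hval1, Nat.cast_one, add_assoc,
          show (1 : ZMod 2) + 1 = 0 from by decide, add_zero]
      rcases hx with h | h | h | h <;> subst h
      · rfl
      · rfl
      · funext t; exact hstep t
      · funext t
        show a0 (t+1+1) + 1 = a0 t + 1
        rw [hstep t]
  -- values of the four points at 0 and 1
  have ha00 : a0 0 = 0 := by
    show (((0 : Fin (2*p)).val : ℕ) : ZMod 2) = 0
    rw [Fin.val_zero, Nat.cast_zero]
  have ha01 : a0 1 = 1 := by
    show (((1 : Fin (2*p)).val : ℕ) : ZMod 2) = 1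
    rw [hval1, Nat.cast_one]
  have ha10 : a1 0 = 1 := by
    show (((0 : Fin (2*p)).val : ℕ) : ZMod 2) + 1 = 1
    rw [Fin.val_zero, Nat.cast_zero, zero_add]
  have ha11 : a1 1 = 0 := by
    show (((1 : Fin (2*p)).val : ℕ) : ZMod 2) + 1 = 0
    rw [hval1, Nat.cast_one]
    decide
  have hzo : (0 : ZMod 2) ≠ 1 := by decide
  have hne1 : v0 ≠ v1 := fun h => hzo (congrFun h 0)
  have hne2 : v0 ≠ a0 := fun h => hzo ((congrFun h 1).trans ha01)
  have hne3 : v0 ≠ a1 := fun h => hzo ((congrFun h 0).trans ha10)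
  have hne4 : v1 ≠ a0 := fun h => hzo (((congrFun h 0).trans ha00).symm)
  have hne5 : v1 ≠ a1 := fun h => hzo (((congrFun h 1).trans ha11).symm)
  have hne6 : a0 ≠ a1 := fun h => hzo (ha00.symm.trans ((congrFun h 0).trans ha10))
  -- sum over the fixed points
  have hsum4 : ∀ g : (Fin (2*p) → ZMod 2) → ℤ,
      (∑ x ∈ Finset.univ.filter (fun x => T x = x), ((g x : ℤ) : ZMod p)) =
        ((g v0 : ℤ) : ZMod p) + ((g v1 : ℤ) : ZMod p) + ((g a0 : ℤ) : ZMod p)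
          + ((g a1 : ℤ) : ZMod p) := by
    intro g
    rw [hfix]
    rw [Finset.sum_insert (by simp [hne1, hne2, hne3]),
      Finset.sum_insert (by simp [hne4, hne5]),
      Finset.sum_insert (by simp [hne6]), Finset.sum_singleton]
    ring
  -- weights
  have hcast20 : ∀ m : ℕ, ((2*m : ℕ) : ZMod 2) = 0 :=
    fun m => (ZMod.natCast_eq_zero_iff _ _).2 ⟨m, rfl⟩
  have hw0 : (∑ i, v0 i) = 0 := by
    show (∑ _i : Fin (2*p), (0 : ZMod 2)) = 0
    simp
  have hw1 : (∑ i, v1 i) = 0 := by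
    show (∑ _i : Fin (2*p), (1 : ZMod 2)) = 0
    rw [Finset.sum_const, Finset.card_univ, Fintype.card_fin, nsmul_eq_mul, mul_one]
    exact hcast20 p
  have hwa0 : (∑ i, a0 i) = 1 := by
    show (∑ i : Fin (2*p), ((i.val : ℕ) : ZMod 2)) = 1
    rw [← Nat.cast_sum]
    have hG : (∑ i : Fin (2*p), (i.val : ℕ)) = p * (2*p - 1) := by
      rw [Fin.sum_univ_eq_sum_range (fun i => i) (2*p)]
      apply Nat.eq_of_mul_eq_mul_right (show 0 < 2 by norm_num)
      rw [Finset.sum_range_id_mul_two (2*p)]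
      set q := 2*p - 1
      ring
    obtain ⟨m, hm⟩ := hp.odd_of_ne_two (by omega)
    have hk : p * (2*p - 1) = 2*(4*m*m+3*m) + 1 := by
      subst hm
      have h3 : 2*(2*m+1) - 1 = 4*m+1 := by omega
      rw [h3]
      ring
    rw [hG, hk, show ((2*(4*m*m+3*m)+1 : ℕ) : ZMod 2)
        = ((2*(4*m*m+3*m) : ℕ) : ZMod 2) + 1 from by push_cast; ring,
      hcast20, zero_add]
  have hwa1 : (∑ i, a1 i) = 1 := by
    show (∑ i : Fin (2*p), (((i.val : ℕ) : ZMod 2) + 1)) = 1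
    rw [Finset.sum_add_distrib]
    rw [show (∑ i : Fin (2*p), ((i.val : ℕ) : ZMod 2)) = 1 from hwa0]
    rw [Finset.sum_const, Finset.card_univ, Fintype.card_fin, nsmul_eq_mul, mul_one,
      hcast20 p, add_zero]
  -- f a1 = f a0
  have hfa : f a1 = f a0 := by
    have hshift : a1 = fun t => a0 (t + 1) := by
      funext t
      show ((t.val : ℕ) : ZMod 2) + 1 = (((t + 1 : Fin (2*p)).val : ℕ) : ZMod 2)
      rw [hvaladd, hval1, Nat.cast_one]
    rw [hshift, hrot1 a0]
  -- sum of T x equals sum of x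
  have hsumT : ∀ x : Fin (2*p) → ZMod 2, (∑ i, (T x) i) = ∑ i, x i := by
    intro x
    show (∑ i : Fin (2*p), x (i + 1 + 1)) = ∑ i, x i
    have h4 := Equiv.sum_comp (Equiv.addRight (1 + 1 : Fin (2*p))) x
    simpa using h4
  -- the two bent instances
  have hb0 := hbent (fun _ => 0)
  simp only [zero_mul, Finset.sum_const_zero, add_zero] at hb0
  have hb1 := hbent (fun _ => 1)
  simp only [one_mul] at hb1
  have hE0 := orbit_sum hp T hTp (fun x => (-1:ℤ)^((f x).val)) (fun x => by
    show (-1:ℤ)^((f (T x)).val) = (-1:ℤ)^((f x).val)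
    rw [hfT])
  have hE1 := orbit_sum hp T hTp (fun x => (-1:ℤ)^((f x + ∑ i, x i).val))
    (fun x => by
      show (-1:ℤ)^((f (T x) + ∑ i, (T x) i).val) = (-1:ℤ)^((f x + ∑ i, x i).val)
      rw [hfT, hsumT])
  rw [hsum4] at hE0 hE1
  -- sign lemma
  have hsgn : ∀ c : ZMod 2, (-1:ℤ)^((c+1).val) = -(-1:ℤ)^(c.val) := by decide
  -- simplify values
  simp only [hfa] at hE0 hE1
  simp only [hw0, hw1, hwa0, hwa1, add_zero] at hE1
  simp only [hsgn] at hE1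
  -- now the contradiction
  intro h
  have hAB : f v1 = f v0 := h.symm
  simp only [hAB] at hE0 hE1
  set A : ℤ := (-1:ℤ)^((f v0).val) with hAdef
  set C : ℤ := (-1:ℤ)^((f a0).val) with hCdef
  have hcard2 : ((2:ℕ) : ZMod p) ≠ 0 := by
    rw [Ne, ZMod.natCast_eq_zero_iff]
    intro hdvd
    have := Nat.le_of_dvd (by norm_num) hdvd
    omega
  have h2ne : (2 : ZMod p) ≠ 0 := by
    intro hc
    apply hcard2
    exact_mod_cast hc
  have hzero_ne : ∀ S : ℤ, (S = 2^p ∨ S = -(2^p)) → ((S : ZMod p) ≠ 0) := by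
    intro S hS h0
    apply h2ne
    rcases hS with hh | hh
    · subst hh
      push_cast at h0
      rwa [ZMod.pow_card] at h0
    · subst hh
      push_cast at h0
      rw [ZMod.pow_card] at h0
      exact neg_eq_zero.1 h0
  have hsignA : A = 1 ∨ A = -1 :=
    (Nat.even_or_odd ((f v0).val)).imp (fun he => he.neg_one_pow) (fun ho => ho.neg_one_pow)
  have hsignC : C = 1 ∨ C = -1 :=
    (Nat.even_or_odd ((f a0).val)).imp (fun he => he.neg_one_pow) (fun ho => ho.neg_one_pow)
  have hCA : C = A ∨ C = -A := by
    rcases hsignA with hh1 | hh1 <;> rcases hsignC with hh2 | hh2 <;> rw [hh1, hh2] <;> norm_num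
  rcases hCA with hc | hc
  · refine hzero_ne _ hb1 ?_
    rw [hE1, hc]
    push_cast
    ring
  · refine hzero_ne _ hb0 ?_
    rw [hE0, hc]
    push_cast
    ring
end

section
/- Let n = 2p with p an odd prime and let f be a monomial rotation symmetric Boolean function in n variables whose orbit has exactly n monomials (full-cycle). Then f is not bent. -/
lemma orbit_dvd {X : Type*} [DecidableEq X] {p : ℕ} (hp : p.Prime)
    (σ : X → X) (hσ : σ^[p] = id) (g : X → ℤ) (hg : ∀ x, g (σ x) = g x) :
    ∀ s : Finset X, (∀ x ∈ s, σ x ∈ s) → (∀ x ∈ s, σ x ≠ x) →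
      (p : ℤ) ∣ ∑ x ∈ s, g x := by
  have hpos : 0 < p := hp.pos
  have hinj : Function.Injective σ := by
    intro a b hab
    have h1 : σ^[p-1] (σ a) = σ^[p-1] (σ b) := by rw [hab]
    have hps : (p-1).succ = p := by omega
    rw [← Function.iterate_succ_apply, ← Function.iterate_succ_apply,
      hps, hσ, id_eq, id_eq] at h1
    exact h1
  have hgk : ∀ (k : ℕ) (x : X), g (σ^[k] x) = g x := by
    intro k
    induction k with
    | zero => intro x; rfl
    | succ k ih => intro x; rw [Function.iterate_succ_apply', hg, ih]
  intro s
  induction s using Finset.strongInduction with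
  | _ s ih =>
    intro hclosed hfix
    rcases s.eq_empty_or_nonempty with rfl | ⟨x, hx⟩
    · simp
    · set o : Finset X := (Finset.range p).image (fun k => σ^[k] x) with ho
      have hmem : ∀ k : ℕ, σ^[k] x ∈ s := by
        intro k
        induction k with
        | zero => exact hx
        | succ k ih2 => rw [Function.iterate_succ_apply']; exact hclosed _ ih2
      have hperiod : ∀ d : ℕ, 0 < d → d < p → σ^[d] x ≠ x := by
        intro d hd0 hdp habs
        have h1 : Function.IsPeriodicPt σ d x := habs
        have h2 : Function.IsPeriodicPt σ p x := by
          show σ^[p] x = x; rw [hσ]; rfl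
        have hco : Nat.gcd d p = 1 :=
          Nat.Coprime.symm ((hp.coprime_iff_not_dvd).mpr (Nat.not_dvd_of_pos_of_lt hd0 hdp))
        have h3 : Function.IsPeriodicPt σ 1 x := by
          have := h1.gcd h2; rwa [hco] at this
        exact hfix x hx (by simpa [Function.IsPeriodicPt, Function.IsFixedPt] using h3)
      have hinjOn : Set.InjOn (fun k => σ^[k] x) (Finset.range p) := by
        intro a ha b hb hab
        simp only [Finset.coe_range, Set.mem_Iio] at ha hb
        by_contra hne
        rcases Nat.lt_or_ge a b with hlt | hge
        · have : σ^[a] (σ^[b-a] x) = σ^[a] x := by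
            rw [← Function.iterate_add_apply, Nat.add_sub_cancel' hlt.le]
            exact hab.symm
          exact hperiod (b-a) (by omega) (by omega) (hinj.iterate a this)
        · have hlt : b < a := by omega
          have : σ^[b] (σ^[a-b] x) = σ^[b] x := by
            rw [← Function.iterate_add_apply, Nat.add_sub_cancel' hlt.le]
            exact hab
          exact hperiod (a-b) (by omega) (by omega) (hinj.iterate b this)
      have hsub : o ⊆ s := by
        intro y hy
        rw [ho, Finset.mem_image] at hy
        obtain ⟨k, _, rfl⟩ := hy
        exact hmem k
      have hone : o.Nonempty := ⟨x, by
        rw [ho, Finset.mem_image]; exact ⟨0, Finset.mem_range.mpr hpos, rfl⟩⟩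
      have hsumo : ∑ y ∈ o, g y = p * g x := by
        rw [ho, Finset.sum_image (fun a ha b hb h => hinjOn ha hb h)]
        simp [hgk]
      have hclosed' : ∀ y ∈ s \ o, σ y ∈ s \ o := by
        intro y hy
        rw [Finset.mem_sdiff] at hy ⊢
        refine ⟨hclosed y hy.1, fun habs => hy.2 ?_⟩
        rw [ho, Finset.mem_image] at habs
        obtain ⟨k, hk, hk2⟩ := habs
        rw [Finset.mem_range] at hk
        rcases Nat.eq_zero_or_pos k with rfl | hk0
        · have he : σ (σ^[p-1] x) = σ y := by
            have e := Function.iterate_succ_apply' σ (p-1) x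
            have hps : (p-1).succ = p := by omega
            rw [hps, hσ] at e
            rw [← e]; exact hk2
          rw [ho, Finset.mem_image]
          exact ⟨p-1, Finset.mem_range.mpr (by omega), hinj he⟩
        · have he : σ (σ^[k-1] x) = σ y := by
            have e := Function.iterate_succ_apply' σ (k-1) x
            have hps : (k-1).succ = k := by omega
            rw [hps] at e
            rw [← e]; exact hk2
          rw [ho, Finset.mem_image]
          exact ⟨k-1, Finset.mem_range.mpr (by omega), hinj he⟩
      have hss : s \ o ⊂ s := Finset.sdiff_ssubset hsub hone
      have hrec := ih (s \ o) hss hclosed'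
        (fun y hy => hfix y (Finset.mem_sdiff.mp hy).1)
      rw [← Finset.sum_sdiff hsub, hsumo]
      exact dvd_add hrec ⟨g x, rfl⟩

lemma sum_cong_fixed {X : Type*} [Fintype X] [DecidableEq X] {p : ℕ} (hp : p.Prime)
    (σ : X → X) (hσ : σ^[p] = id) (g : X → ℤ) (hg : ∀ x, g (σ x) = g x) :
    (p : ℤ) ∣ ∑ x, g x - ∑ x ∈ Finset.univ.filter (fun x => σ x = x), g x := by
  have hpos : 0 < p := hp.pos
  have hinj : Function.Injective σ := by
    intro a b hab
    have h1 : σ^[p-1] (σ a) = σ^[p-1] (σ b) := by rw [hab]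
    have hps : (p-1).succ = p := by omega
    rw [← Function.iterate_succ_apply, ← Function.iterate_succ_apply,
      hps, hσ, id_eq, id_eq] at h1
    exact h1
  have key := orbit_dvd hp σ hσ g hg (Finset.univ.filter (fun x => ¬ σ x = x))
    (by
      intro x hxmem
      rw [Finset.mem_filter] at hxmem ⊢
      exact ⟨Finset.mem_univ _, fun habs => hxmem.2 (hinj habs)⟩)
    (by intro x hxmem; exact (Finset.mem_filter.mp hxmem).2)
  have hsplit := Finset.sum_filter_add_sum_filter_not Finset.univ (fun x => σ x = x) g
  rw [← hsplit]
  simpa using key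

open Fin.NatCast in
/-- For `n = 2p`, `p` an odd prime, a full-cycle MRS Boolean function
(sum of the exactly `n` distinct cyclic shifts of a monomial containing `x₀`)
is not bent. -/
theorem stmt16 (p : ℕ) (hp : p.Prime) (hp2 : 2 < p) (S : Finset (Fin (2*p)))
    (hS0 : (⟨0, by omega⟩ : Fin (2*p)) ∈ S)
    (hfull : (Finset.univ.image (fun j : Fin (2*p) => S.image (· + j))).card = 2*p) :
    ¬ (∀ w : Fin (2*p) → ZMod 2,
      (∑ x : Fin (2*p) → ZMod 2,
        (-1 : ℤ) ^ (((∑ T ∈ Finset.univ.image (fun j : Fin (2*p) => S.image (· + j)),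
            ∏ t ∈ T, x t) + ∑ i, w i * x i).val)) = 2 ^ p ∨
      (∑ x : Fin (2*p) → ZMod 2,
        (-1 : ℤ) ^ (((∑ T ∈ Finset.univ.image (fun j : Fin (2*p) => S.image (· + j)),
            ∏ t ∈ T, x t) + ∑ i, w i * x i).val)) = -(2 ^ p)) := by
  intro hbent
  haveI : NeZero (2*p) := ⟨by omega⟩
  set 𝒯 : Finset (Finset (Fin (2*p))) :=
    Finset.univ.image (fun j : Fin (2*p) => S.image (· + j)) with h𝒯
  -- the MRS polynomial
  set F : (Fin (2*p) → ZMod 2) → ZMod 2 := fun x => ∑ T ∈ 𝒯, ∏ t ∈ T, x t with hF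
  -- shift invariance
  have haddinj : ∀ c : Fin (2*p), Function.Injective (· + c) := by
    intro c a b hab
    simpa using congrArg (· + (-c)) hab
  have hTmem : ∀ (c : Fin (2*p)), ∀ T ∈ 𝒯, T.image (· + c) ∈ 𝒯 := by
    intro c T hT
    rw [h𝒯, Finset.mem_image] at hT ⊢
    obtain ⟨j, _, rfl⟩ := hT
    refine ⟨j + c, Finset.mem_univ _, ?_⟩
    rw [Finset.image_image]
    congr 1
    funext t
    simp [add_assoc]
  have hshift : ∀ (x : Fin (2*p) → ZMod 2) (c : Fin (2*p)),
      ∑ T ∈ 𝒯, ∏ t ∈ T, x (t + c) = F x := by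
    intro x c
    rw [hF]
    refine Finset.sum_nbij' (fun T => T.image (· + c)) (fun T => T.image (· + (-c)))
      (hTmem c) (hTmem (-c)) ?_ ?_ ?_
    · intro T _
      rw [Finset.image_image]
      have : ((· + (-c)) ∘ (· + c)) = (id : Fin (2*p) → Fin (2*p)) := by
        funext t; simp
      rw [this, Finset.image_id]
    · intro T _
      rw [Finset.image_image]
      have : ((· + c) ∘ (· + (-c))) = (id : Fin (2*p) → Fin (2*p)) := by
        funext t; simp
      rw [this, Finset.image_id]
    · intro T _
      rw [Finset.prod_image (fun a _ b _ h => haddinj c h)]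
  -- basic Fin facts
  have hz0 : ((0 : Fin (2*p)) : ℕ) = 0 := by simp
  have hz1 : ((1 : Fin (2*p)) : ℕ) = 1 := by
    rw [Fin.val_one']; exact Nat.mod_eq_of_lt (by omega)
  have hpar : ∀ (i : Fin (2*p)) (c : ℕ),
      ((i + ((c : ℕ) : Fin (2*p))) : Fin (2*p)).val % 2 = (i.val + c) % 2 := by
    intro i c
    rw [Fin.add_def, Fin.val_natCast]
    have h2 : 2 ∣ 2*p := ⟨p, rfl⟩
    have e0 : (i.val + c % (2*p)) % (2*p) % 2 = (i.val + c % (2*p)) % 2 :=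
      Nat.mod_mod_of_dvd _ h2
    have e1 : c % (2*p) % 2 = c % 2 := Nat.mod_mod_of_dvd c h2
    rw [e0, Nat.add_mod, e1, ← Nat.add_mod]
  -- rotation by two
  set σ : (Fin (2*p) → ZMod 2) → (Fin (2*p) → ZMod 2) :=
    fun x i => x (i + ((2:ℕ) : Fin (2*p))) with hσdef
  have hiter : ∀ (k : ℕ) (x : Fin (2*p) → ZMod 2) (i : Fin (2*p)),
      (σ^[k] x) i = x (i + ((2*k : ℕ) : Fin (2*p))) := by
    intro k
    induction k with
    | zero => intro x i; simp
    | succ k ih =>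
      intro x i
      rw [Function.iterate_succ_apply, ih]
      show x ((i + ((2*k : ℕ) : Fin (2*p))) + ((2:ℕ) : Fin (2*p))) = _
      congr 1
      have hc : ((2*(k+1) : ℕ) : Fin (2*p)) = ((2*k : ℕ) : Fin (2*p)) + ((2:ℕ) : Fin (2*p)) := by
        rw [Nat.mul_succ, Nat.cast_add]
      rw [hc, add_assoc]
  have hσp : σ^[p] = id := by
    funext x i
    rw [hiter p x i]
    have hc : ((2*p : ℕ) : Fin (2*p)) = 0 := by
      exact_mod_cast Fin.natCast_self (2*p)
    rw [hc, add_zero]; rfl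
  -- the four candidate fixed points
  set v : ZMod 2 → ZMod 2 → (Fin (2*p) → ZMod 2) :=
    fun a b i => if i.val % 2 = 0 then a else b with hvdef
  have hvab : ∀ (a b : ZMod 2) (i : Fin (2*p)), v a b i = if i.val % 2 = 0 then a else b :=
    fun a b i => rfl
  have hfixv : ∀ a b, σ (v a b) = v a b := by
    intro a b; funext i
    show v a b (i + ((2:ℕ) : Fin (2*p))) = v a b i
    rw [hvab, hvab]
    have h1 : ((i + ((2:ℕ) : Fin (2*p))) : Fin (2*p)).val % 2 = i.val % 2 := by
      rw [hpar i 2]; omega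
    rw [h1]
  have hfixeq : ∀ x : Fin (2*p) → ZMod 2, σ x = x → x = v (x 0) (x 1) := by
    intro x hx
    have hstep : ∀ i, x (i + ((2:ℕ) : Fin (2*p))) = x i := fun i => congrFun hx i
    have hiter2 : ∀ (k : ℕ) (i : Fin (2*p)), x (i + ((2*k : ℕ) : Fin (2*p))) = x i := by
      intro k
      induction k with
      | zero => intro i; simp
      | succ k ih =>
        intro i
        have hc : ((2*(k+1) : ℕ) : Fin (2*p)) = ((2*k : ℕ) : Fin (2*p)) + ((2:ℕ) : Fin (2*p)) := by
          rw [Nat.mul_succ, Nat.cast_add]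
        rw [hc, ← add_assoc, hstep, ih]
    funext j
    by_cases hj : j.val % 2 = 0
    · have hxj : x j = x 0 := by
        have h1 : j = (0 : Fin (2*p)) + ((2*(j.val/2) : ℕ) : Fin (2*p)) := by
          rw [zero_add]
          have h2 : 2*(j.val/2) = j.val := by omega
          rw [h2, Fin.cast_val_eq_self]
        conv_lhs => rw [h1]
        rw [hiter2]
      rw [hxj, hvab, if_pos hj]
    · have hxj : x j = x 1 := by
        have h1 : j = (1 : Fin (2*p)) + ((2*(j.val/2) : ℕ) : Fin (2*p)) := by
          have h3 : j.val = 2*(j.val/2) + 1 := by omega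
          have h5 : ((j.val : ℕ) : Fin (2*p)) = (1 : Fin (2*p)) + ((2*(j.val/2) : ℕ) : Fin (2*p)) := by
            conv_lhs => rw [h3]
            push_cast
            exact add_comm _ _
          calc j = ((j.val : ℕ) : Fin (2*p)) := (Fin.cast_val_eq_self j).symm
          _ = (1 : Fin (2*p)) + ((2*(j.val/2) : ℕ) : Fin (2*p)) := h5
        conv_lhs => rw [h1]
        rw [hiter2]
      rw [hxj, hvab, if_neg hj]
  -- distinctness
  have hvinj : ∀ a b a' b' : ZMod 2, v a b = v a' b' → a = a' ∧ b = b' := by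
    intro a b a' b' h
    constructor
    · have h0 := congrFun h 0
      rw [hvab, hvab, hz0] at h0
      norm_num at h0
      exact h0
    · have h1 := congrFun h 1
      rw [hvab, hvab, hz1] at h1
      norm_num at h1
      exact h1
  have hZ2 : ∀ a : ZMod 2, a = 0 ∨ a = 1 := by decide
  have hfixset : Finset.univ.filter (fun x => σ x = x)
      = {v 0 0, v 0 1, v 1 0, v 1 1} := by
    ext x
    simp only [Finset.mem_filter, Finset.mem_univ, true_and, Finset.mem_insert,
      Finset.mem_singleton]
    constructor
    · intro hx
      have hx2 := hfixeq x hx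
      rcases hZ2 (x 0) with ha | ha <;> rcases hZ2 (x 1) with hb | hb <;>
        rw [ha, hb] at hx2 <;> tauto
    · intro hx
      rcases hx with rfl | rfl | rfl | rfl <;> exact hfixv _ _
  have hne01 : ((0:ZMod 2) = 1) → False := by decide
  have hne10 : ((1:ZMod 2) = 0) → False := by decide
  have hfixsum : ∀ g : (Fin (2*p) → ZMod 2) → ℤ,
      ∑ x ∈ Finset.univ.filter (fun x => σ x = x), g x
        = g (v 0 0) + g (v 0 1) + g (v 1 0) + g (v 1 1) := by
    intro g
    rw [hfixset]
    have d1 : v (0:ZMod 2) 0 ∉ ({v 0 1, v 1 0, v 1 1} : Finset _) := by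
      simp only [Finset.mem_insert, Finset.mem_singleton]
      push_neg
      refine ⟨fun h => hne01 (hvinj _ _ _ _ h).2, fun h => hne01 (hvinj _ _ _ _ h).1,
        fun h => hne01 (hvinj _ _ _ _ h).1⟩
    have d2 : v (0:ZMod 2) 1 ∉ ({v 1 0, v 1 1} : Finset _) := by
      simp only [Finset.mem_insert, Finset.mem_singleton]
      push_neg
      refine ⟨fun h => hne01 (hvinj _ _ _ _ h).1, fun h => hne01 (hvinj _ _ _ _ h).1⟩
    have d3 : v (1:ZMod 2) 0 ≠ v 1 1 := fun h => hne01 (hvinj _ _ _ _ h).2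
    rw [Finset.sum_insert d1, Finset.sum_insert d2, Finset.sum_pair d3]
    ring
  -- properties of F on the fixed points
  have hTne : ∀ T ∈ 𝒯, T.Nonempty := by
    intro T hT
    rw [h𝒯, Finset.mem_image] at hT
    obtain ⟨j, _, rfl⟩ := hT
    exact ⟨_, Finset.mem_image_of_mem _ hS0⟩
  have hF00 : F (v 0 0) = 0 := by
    show (∑ T ∈ 𝒯, ∏ t ∈ T, v 0 0 t) = 0
    refine Finset.sum_eq_zero ?_
    intro T hT
    obtain ⟨t0, ht0⟩ := hTne T hT
    refine Finset.prod_eq_zero ht0 ?_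
    rw [hvab]
    exact ite_self 0
  have hcast2p : ((2*p : ℕ) : ZMod 2) = 0 := by
    rw [ZMod.natCast_eq_zero_iff]; exact ⟨p, rfl⟩
  have hF11 : F (v 1 1) = 0 := by
    show (∑ T ∈ 𝒯, ∏ t ∈ T, v 1 1 t) = 0
    have h1 : ∀ T ∈ 𝒯, ∏ t ∈ T, v 1 1 t = 1 := by
      intro T _
      refine Finset.prod_eq_one ?_
      intro t _
      rw [hvab]
      exact ite_self 1
    rw [Finset.sum_congr rfl h1, Finset.sum_const, hfull, nsmul_eq_mul, mul_one, hcast2p]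
  have hv01shift : ∀ i, v (0:ZMod 2) 1 i = v 1 0 (i + ((1:ℕ) : Fin (2*p))) := by
    intro i
    rw [hvab, hvab, hpar i 1]
    rcases Nat.mod_two_eq_zero_or_one i.val with h | h
    · have h2 : (i.val + 1) % 2 = 1 := by omega
      rw [h, h2]; norm_num
    · have h2 : (i.val + 1) % 2 = 0 := by omega
      rw [h, h2]; norm_num
  have hFe : F (v 0 1) = F (v 1 0) := by
    have h1 : F (v 0 1) = ∑ T ∈ 𝒯, ∏ t ∈ T, v 1 0 (t + ((1:ℕ) : Fin (2*p))) := by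
      show (∑ T ∈ 𝒯, ∏ t ∈ T, v 0 1 t) = _
      exact Finset.sum_congr rfl (fun T _ => Finset.prod_congr rfl (fun t _ => hv01shift t))
    rw [h1, hshift (v 1 0) _]
  -- weights
  have hw00 : ∑ i, v (0:ZMod 2) 0 i = 0 := by
    refine Finset.sum_eq_zero ?_
    intro i _
    rw [hvab]
    exact ite_self 0
  have hw11 : ∑ i, v (1:ZMod 2) 1 i = 0 := by
    have h1 : ∀ i ∈ Finset.univ, v (1:ZMod 2) 1 i = 1 := by
      intro i _
      rw [hvab]
      exact ite_self 1
    rw [Finset.sum_congr rfl h1, Finset.sum_const, Finset.card_univ, Fintype.card_fin,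
      nsmul_eq_mul, mul_one, hcast2p]
  have hw01 : ∑ i, v (0:ZMod 2) 1 i = 1 := by
    have h1 : ∀ i ∈ Finset.univ, v (0:ZMod 2) 1 i = ((i.val : ℕ) : ZMod 2) := by
      intro i _
      rw [hvab, ← ZMod.natCast_mod i.val 2]
      rcases Nat.mod_two_eq_zero_or_one i.val with h | h
      · rw [h]; norm_num
      · rw [h]; norm_num
    rw [Finset.sum_congr rfl h1, ← Nat.cast_sum]
    have h2 : (∑ i : Fin (2*p), (i.val : ℕ)) = ∑ k ∈ Finset.range (2*p), k :=
      Fin.sum_univ_eq_sum_range (fun k => k) (2*p)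
    have h3 : (∑ k ∈ Finset.range (2*p), k) = p * (2*p - 1) := by
      have h4 := Finset.sum_range_id_mul_two (2*p)
      have h5 : (2*p) * (2*p-1) = (p * (2*p-1)) * 2 := by ring
      rw [h5] at h4
      exact Nat.eq_of_mul_eq_mul_right (by norm_num) h4
    have hoddp : p % 2 = 1 := Nat.odd_iff.mp (hp.odd_of_ne_two (by omega))
    have h6 : (p * (2*p - 1)) % 2 = 1 := by
      rw [Nat.mul_mod, hoddp]
      have h7 : (2*p - 1) % 2 = 1 := by omega
      rw [h7]
    rw [h2, h3, ← ZMod.natCast_mod, h6, Nat.cast_one]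
  have hw10 : ∑ i, v (1:ZMod 2) 0 i = 1 := by
    have h1 : ∑ i, v (0:ZMod 2) 1 i = ∑ i, v (1:ZMod 2) 0 i := by
      rw [Finset.sum_congr rfl (fun i _ => hv01shift i)]
      exact Fintype.sum_equiv (Equiv.addRight ((1:ℕ) : Fin (2*p))) _ _ (fun i => rfl)
    rw [← h1, hw01]
  -- the two Walsh sums
  set g0 : (Fin (2*p) → ZMod 2) → ℤ := fun x => (-1:ℤ)^((F x).val) with hg0
  set g1 : (Fin (2*p) → ZMod 2) → ℤ := fun x => (-1:ℤ)^((F x + ∑ i, x i).val) with hg1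
  have hFσ : ∀ x, F (σ x) = F x := by
    intro x
    exact hshift x ((2:ℕ) : Fin (2*p))
  have hwσ : ∀ x : Fin (2*p) → ZMod 2, ∑ i, (σ x) i = ∑ i, x i := by
    intro x
    exact Fintype.sum_equiv (Equiv.addRight ((2:ℕ) : Fin (2*p))) _ _ (fun i => rfl)
  have hg0inv : ∀ x, g0 (σ x) = g0 x := by
    intro x
    rw [hg0]
    simp only
    rw [hFσ]
  have hg1inv : ∀ x, g1 (σ x) = g1 x := by
    intro x
    rw [hg1]
    simp only
    rw [hFσ, hwσ]
  have hd0 := sum_cong_fixed hp σ hσp g0 hg0inv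
  have hd1 := sum_cong_fixed hp σ hσp g1 hg1inv
  rw [hfixsum g0] at hd0
  rw [hfixsum g1] at hd1
  -- the hypothesis at w = 0 and w = 1
  have h0 := hbent (fun _ => 0)
  have h1 := hbent (fun _ => 1)
  simp only [zero_mul, Finset.sum_const_zero, add_zero] at h0
  simp only [one_mul] at h1
  have hW0 : (∑ x, g0 x) = 2^p ∨ (∑ x, g0 x) = -(2^p) := h0
  have hW1 : (∑ x, g1 x) = 2^p ∨ (∑ x, g1 x) = -(2^p) := h1
  -- final contradiction
  have hfin : ∀ Wd : ℤ, (p:ℤ) ∣ Wd → (Wd = 2^p ∨ Wd = -(2^p)) → False := by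
    intro Wd hdvd hW
    have h2 : (p:ℤ) ∣ (2:ℤ)^p := by
      rcases hW with rfl | rfl
      · exact hdvd
      · exact (dvd_neg).mp hdvd
    have h3 : (p:ℤ) ∣ ((2^p : ℕ) : ℤ) := by push_cast; exact h2
    rw [Int.natCast_dvd_natCast] at h3
    have h4 := Nat.Prime.dvd_of_dvd_pow hp h3
    have h5 := Nat.le_of_dvd (by norm_num) h4
    omega
  -- compute the fixed-point sums
  have hg000 : g0 (v 0 0) = 1 := by rw [hg0]; simp only; rw [hF00]; norm_num
  have hg011 : g0 (v 1 1) = 1 := by rw [hg0]; simp only; rw [hF11]; norm_num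
  have hg100 : g1 (v 0 0) = 1 := by
    rw [hg1]; simp only; rw [hF00, hw00]; norm_num
  have hg111 : g1 (v 1 1) = 1 := by
    rw [hg1]; simp only; rw [hF11, hw11]; norm_num
  rcases hZ2 (F (v 1 0)) with he | he
  · -- F (v 1 0) = 0 : then g1 sum over fixed points is 0
    have ha : g1 (v 1 0) = -1 := by
      rw [hg1]; simp only; rw [he, hw10]; norm_num [ZMod.val_one]
    have hb : g1 (v 0 1) = -1 := by
      rw [hg1]; simp only; rw [hFe, he, hw01]; norm_num [ZMod.val_one]
    rw [hg100, hb, ha, hg111] at hd1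
    have : (p:ℤ) ∣ ∑ x, g1 x := by simpa using hd1
    exact hfin _ this hW1
  · -- F (v 1 0) = 1 : then g0 sum over fixed points is 0
    have ha : g0 (v 1 0) = -1 := by
      rw [hg0]; simp only; rw [he]; norm_num [ZMod.val_one]
    have hb : g0 (v 0 1) = -1 := by
      rw [hg0]; simp only; rw [hFe, he]; norm_num [ZMod.val_one]
    rw [hg000, hb, ha, hg011] at hd0
    have : (p:ℤ) ∣ ∑ x, g0 x := by simpa using hd0
    exact hfin _ this hW0
end
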